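/- arXiv:0710.2088 — 8 statements merged into one kernel-verified Lean document; each statement's English description precedes it below -/
import Mathlib

section
/- Let q be a prime power, n ≥ 1, x : ZMod n → F_q, and let X = circulant(x) be the circulant matrix with first column x. Then x is a most complicated point for every translation-invariant linear operator A on F_q^n if and only if X is invertible over F_q. -/
open Function Polynomial Finset

/-- The preperiod of the orbit of `x` under `T`: the least `s ≥ 0` such that
`T^[s+t] x = T^[s] x` for some `t ≥ 1`. -/
noncomputable def orbitPreperiod {S : Type*} (T : S → S) (x : S) : ℕ :=
  sInf {s | ∃ t, 1 ≤ t ∧ T^[s + t] x = T^[s] x}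

/-- The (eventual) period of the orbit of `x` under `T`: the least `t ≥ 1` such that
`T^[s+t] x = T^[s] x` for some `s ≥ 0`. -/
noncomputable def orbitPeriod {S : Type*} (T : S → S) (x : S) : ℕ :=
  sInf {t | 1 ≤ t ∧ ∃ s, T^[s + t] x = T^[s] x}

/-- `x` is most complicated for `T` if both its period and its preperiod are maximal. -/
def MostComplicated {S : Type*} [Fintype S] (T : S → S) (x : S) : Prop :=
  orbitPeriod T x = Finset.univ.sup (fun y => orbitPeriod T y) ∧
  orbitPreperiod T x = Finset.univ.sup (fun y => orbitPreperiod T y)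

/-- `x` is almost most complicated for `T` if its period is maximal and its preperiod
equals the maximal preperiod minus one. -/
def AlmostMostComplicated {S : Type*} [Fintype S] (T : S → S) (x : S) : Prop :=
  orbitPeriod T x = Finset.univ.sup (fun y => orbitPeriod T y) ∧
  orbitPreperiod T x = Finset.univ.sup (fun y => orbitPreperiod T y) - 1

/-- The cyclic shift operator `δ` on `F^n`: `(δ x) i = x (i+1)`. -/
def shiftOp (F : Type*) [Field F] (n : ℕ) : (ZMod n → F) →ₗ[F] (ZMod n → F) where
  toFun x := fun i => x (i + 1)
  map_add' _ _ := rfl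
  map_smul' _ _ := rfl

open Matrix

lemma orbit_exists {S : Type*} [Fintype S] (T : S → S) (x : S) :
    ∃ s t, 1 ≤ t ∧ T^[s + t] x = T^[s] x := by
  obtain ⟨a, b, hab, h⟩ := Finite.exists_ne_map_eq_of_infinite (fun k : ℕ => T^[k] x)
  rcases lt_or_gt_of_ne hab with hlt | hlt
  · exact ⟨a, b - a, by omega, by rw [Nat.add_sub_cancel' hlt.le]; exact h.symm⟩
  · exact ⟨b, a - b, by omega, by rw [Nat.add_sub_cancel' hlt.le]; exact h⟩

lemma iterate_mulVec {ι : Type*} [Fintype ι] [DecidableEq ι] {R : Type*} [CommRing R]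
    (B : Matrix ι ι R) (k : ℕ) (y : ι → R) :
    (fun z => B *ᵥ z)^[k] y = B ^ k *ᵥ y := by
  induction k with
  | zero => simp [Matrix.one_mulVec]
  | succ k ih =>
    rw [Function.iterate_succ_apply', ih, Matrix.mulVec_mulVec, ← pow_succ']

lemma pow_circulant {ι : Type*} [Fintype ι] [DecidableEq ι] [AddCommGroup ι]
    {R : Type*} [CommRing R] (a : ι → R) (k : ℕ) :
    ∃ v, (Matrix.circulant a) ^ k = Matrix.circulant v := by
  induction k with
  | zero => exact ⟨Pi.single 0 1, by simp⟩
  | succ k ih =>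
    obtain ⟨v, hv⟩ := ih
    exact ⟨_, by rw [pow_succ, hv, Matrix.circulant_mul]⟩

lemma circulant_mulVec_single {ι : Type*} [Fintype ι] [DecidableEq ι] [AddCommGroup ι]
    {R : Type*} [CommRing R] (v : ι → R) :
    Matrix.circulant v *ᵥ Pi.single 0 1 = v := by
  ext i
  simp [Matrix.mulVec_single, Matrix.circulant_apply]


/-- Lemma 1: `x` is a most complicated point for every translation-invariant
linear operator on `F_q^n` iff the circulant matrix with first column `x` is invertible. -/
theorem stmt1 (q n : ℕ) (hq : IsPrimePow q) [NeZero n]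
    (F : Type) [Field F] [Fintype F] (hF : Fintype.card F = q)
    (x : ZMod n → F) :
    (∀ A : (ZMod n → F) →ₗ[F] (ZMod n → F),
        A ∘ₗ shiftOp F n = shiftOp F n ∘ₗ A →
        MostComplicated (fun y : ZMod n → F => A y) x)
      ↔ IsUnit (Matrix.circulant x) := by
  classical
  have hxe : Matrix.circulant x *ᵥ (Pi.single 0 1 : ZMod n → F) = x :=
    circulant_mulVec_single x
  constructor
  · -- forward
    intro h
    by_contra hM
    have hshift : shiftOp F n = (Matrix.circulant (Pi.single (-1 : ZMod n) (1:F))).mulVecLin := by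
      apply LinearMap.ext
      intro y
      funext i
      simp only [shiftOp, LinearMap.coe_mk, AddHom.coe_mk, Matrix.mulVecLin_apply,
        Matrix.mulVec, dotProduct, Matrix.circulant_apply, Pi.single_apply]
      have hterm : ∀ j : ZMod n, (if i - j = -1 then (1:F) else 0) * y j
          = if j = i + 1 then y j else 0 := by
        intro j
        by_cases hj : j = i + 1
        · rw [if_pos (by rw [hj]; ring), if_pos hj, one_mul]
        · rw [if_neg (fun hc => hj (by linear_combination -hc)), if_neg hj, zero_mul]
      rw [Finset.sum_congr rfl (fun j _ => hterm j),
        Finset.sum_ite_eq' Finset.univ (i + 1) (fun j => y j)]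
      simp
    have hA : (Matrix.circulant x).mulVecLin ∘ₗ shiftOp F n
        = shiftOp F n ∘ₗ (Matrix.circulant x).mulVecLin := by
      rw [hshift, ← Matrix.mulVecLin_mul, ← Matrix.mulVecLin_mul,
        Matrix.circulant_mul_comm]
    have MC := h (Matrix.circulant x).mulVecLin hA
    set T : (ZMod n → F) → (ZMod n → F) := fun y => (Matrix.circulant x).mulVecLin y with hT
    have hTit : ∀ (k : ℕ) (y : ZMod n → F), T^[k] y = (Matrix.circulant x) ^ k *ᵥ y := by
      intro k y
      have hTe : T = fun z => Matrix.circulant x *ᵥ z := by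
        funext z; simp [hT]
      rw [hTe, iterate_mulVec]
    set e0 : ZMod n → F := Pi.single 0 1 with he0
    have hne0 : {s | ∃ t, 1 ≤ t ∧ T^[s + t] e0 = T^[s] e0}.Nonempty := by
      obtain ⟨s, t, ht, hst⟩ := orbit_exists T e0
      exact ⟨s, t, ht, hst⟩
    set s₀ := orbitPreperiod T e0 with hs₀def
    have hs₀mem : s₀ ∈ {s | ∃ t, 1 ≤ t ∧ T^[s + t] e0 = T^[s] e0} := Nat.sInf_mem hne0
    obtain ⟨t, ht, hteq⟩ := hs₀mem
    have hs₀pos : 1 ≤ s₀ := by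
      by_contra hc
      have hz : s₀ = 0 := by omega
      have hteq' := hteq
      rw [hz] at hteq'
      simp only [Nat.zero_add, Function.iterate_zero_apply] at hteq'
      rw [hTit] at hteq'
      obtain ⟨v, hv⟩ := pow_circulant x t
      rw [hv, he0] at hteq'
      rw [circulant_mulVec_single] at hteq'
      have hMt : (Matrix.circulant x) ^ t = 1 := by
        rw [hv, hteq', Matrix.circulant_single_one]
      apply hM
      rw [Matrix.isUnit_iff_isUnit_det]
      have hdt : ((Matrix.circulant x).det) ^ t = 1 := by
        rw [← Matrix.det_pow, hMt, Matrix.det_one]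
      exact IsUnit.of_mul_eq_one ((Matrix.circulant x).det ^ (t - 1)) (by
        rw [← pow_succ', show t - 1 + 1 = t by omega]; exact hdt)
    have hstep : ∀ k : ℕ, Matrix.circulant x ^ k *ᵥ x
        = Matrix.circulant x ^ (k + 1) *ᵥ e0 := by
      intro k
      rw [pow_succ, ← Matrix.mulVec_mulVec, hxe]
    have hxs : (s₀ - 1) ∈ {s | ∃ t, 1 ≤ t ∧ T^[s + t] x = T^[s] x} := by
      refine ⟨t, ht, ?_⟩
      rw [hTit, hTit, hstep, hstep, show s₀ - 1 + t + 1 = s₀ + t by omega,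
        show s₀ - 1 + 1 = s₀ by omega]
      rw [hTit, hTit] at hteq
      exact hteq
    have hlt : orbitPreperiod T x ≤ s₀ - 1 := Nat.sInf_le hxs
    have hsup : s₀ ≤ Finset.univ.sup (fun y => orbitPreperiod T y) := by
      rw [hs₀def]
      exact Finset.le_sup (f := fun y => orbitPreperiod T y) (Finset.mem_univ e0)
    have hMC2 := MC.2
    omega
  · -- backward
    intro hM A hA
    have hAs : ∀ (m : ℕ) (y : ZMod n → F),
        A (fun i => y (i + (m : ZMod n))) = fun i => A y (i + (m : ZMod n)) := by
      intro m
      induction m with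
      | zero => intro y; simp
      | succ m ih =>
        intro y
        have hDz : (fun i => y (i + ((m + 1 : ℕ) : ZMod n)))
            = shiftOp F n (fun i => y (i + (m : ZMod n))) := by
          funext i
          simp only [shiftOp, LinearMap.coe_mk, AddHom.coe_mk]
          congr 1
          push_cast
          ring
        rw [hDz]
        have hcomm := LinearMap.ext_iff.mp hA (fun i => y (i + (m : ZMod n)))
        simp only [LinearMap.comp_apply] at hcomm
        rw [hcomm, ih y]
        funext i
        simp only [shiftOp, LinearMap.coe_mk, AddHom.coe_mk]
        congr 1
        push_cast
        ring
    have hAc : ∀ (c : ZMod n) (y : ZMod n → F),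
        A (fun i => y (i + c)) = fun i => A y (i + c) := by
      intro c y
      have hc : ((c.val : ℕ) : ZMod n) = c := ZMod.natCast_rightInverse c
      rw [← hc]
      exact hAs c.val y
    have hsingle : ∀ j : ZMod n,
        A (Pi.single j (1:F)) = fun i => A (Pi.single 0 1) (i - j) := by
      intro j
      have h1 : (Pi.single j (1:F)) = fun i => (Pi.single 0 1 : ZMod n → F) (i + (-j)) := by
        funext i
        simp only [Pi.single_apply]
        congr 1
        apply propext
        constructor
        · intro hj; rw [hj]; ring
        · intro hj; linear_combination hj
      rw [h1, hAc (-j) (Pi.single 0 1)]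
      funext i
      congr 1
      ring
    have hAy : ∀ y : ZMod n → F, A y = Matrix.circulant (A (Pi.single 0 1)) *ᵥ y := by
      intro y
      have hy : y = ∑ j : ZMod n, Pi.single j (y j) := by
        funext i
        rw [Finset.sum_apply]
        rw [Finset.sum_pi_single]
        simp
      conv_lhs => rw [hy]
      rw [map_sum]
      funext i
      rw [Finset.sum_apply]
      have hterm : ∀ j : ZMod n,
          A (Pi.single j (y j)) i = A (Pi.single 0 1) (i - j) * y j := by
        intro j
        have hsm : Pi.single j (y j) = y j • (Pi.single j 1 : ZMod n → F) := by
          funext k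
          simp [Pi.single_apply, mul_ite, mul_one, mul_zero]
        rw [hsm, A.map_smul]
        simp only [Pi.smul_apply, smul_eq_mul]
        rw [hsingle j]
        ring
      rw [Finset.sum_congr rfl (fun j _ => hterm j)]
      simp only [Matrix.mulVec, dotProduct, Matrix.circulant_apply]
    set a : ZMod n → F := A (Pi.single 0 1) with ha
    set T : (ZMod n → F) → (ZMod n → F) := fun y => A y with hT
    have hTit : ∀ (k : ℕ) (y : ZMod n → F), T^[k] y = (Matrix.circulant a) ^ k *ᵥ y := by
      intro k y
      have hTe : T = fun z => Matrix.circulant a *ᵥ z := by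
        funext z; rw [hT]; exact hAy z
      rw [hTe, iterate_mulVec]
    have hkey : ∀ s t : ℕ, T^[s + t] x = T^[s] x → ∀ y, T^[s + t] y = T^[s] y := by
      intro s t heq y
      rw [hTit, hTit] at heq ⊢
      obtain ⟨v1, hv1⟩ := pow_circulant a (s + t)
      obtain ⟨v2, hv2⟩ := pow_circulant a s
      rw [hv1, hv2] at heq ⊢
      have hswap : ∀ v : ZMod n → F,
          Matrix.circulant v *ᵥ x = Matrix.circulant x *ᵥ v := by
        intro v
        conv_lhs => rw [← hxe]
        rw [Matrix.mulVec_mulVec, Matrix.circulant_mul_comm,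
          ← Matrix.mulVec_mulVec, circulant_mulVec_single]
      rw [hswap, hswap] at heq
      obtain ⟨U, hU⟩ := hM
      have hcancel : v1 = v2 := by
        have h1 := congrArg (fun w => (↑U⁻¹ : Matrix (ZMod n) (ZMod n) F) *ᵥ w) heq
        simp only [Matrix.mulVec_mulVec] at h1
        rw [← hU, Units.inv_mul, Matrix.one_mulVec, Matrix.one_mulVec] at h1
        exact h1
      rw [hcancel]
    have hnex : {t | 1 ≤ t ∧ ∃ s, T^[s + t] x = T^[s] x}.Nonempty := by
      obtain ⟨s, t, ht, hst⟩ := orbit_exists T x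
      exact ⟨t, ht, s, hst⟩
    have hnex' : {s | ∃ t, 1 ≤ t ∧ T^[s + t] x = T^[s] x}.Nonempty := by
      obtain ⟨s, t, ht, hst⟩ := orbit_exists T x
      exact ⟨s, t, ht, hst⟩
    constructor
    · apply le_antisymm
      · exact Finset.le_sup (Finset.mem_univ x)
      · apply Finset.sup_le
        intro y _
        obtain ⟨ht1, s, hst⟩ := Nat.sInf_mem hnex
        exact Nat.sInf_le ⟨ht1, s, hkey s _ hst y⟩
    · apply le_antisymm
      · exact Finset.le_sup (Finset.mem_univ x)
      · apply Finset.sup_le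
        intro y _
        obtain ⟨t, ht1, hst⟩ := Nat.sInf_mem hnex'
        exact Nat.sInf_le ⟨t, ht1, hkey _ t hst y⟩
end

section
/- Let n be an odd prime and let c : ZMod n → ℤ be defined by c(a) = 1 if a is a quadratic nonresidue mod n (i.e., a ≠ 0 and a is not a square in ZMod n) and c(a) = 0 otherwise. Let X be the integer circulant matrix with entries X(i,j) = c(i − j). Then: if n = 4k+1 for some natural number k, then det X = 2k · k^{(n−1)/2}; and if n = 4k+3 for some natural number k, then det X = (2k+1) · (k+1)^{(n−1)/2}. -/
open Matrix AddChar Finset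

lemma aux_sum_char (n : ℕ) [NeZero n] {a : ZMod n} (ha : a ≠ 0) :
    ∑ t : ZMod n, ZMod.stdAddChar (a * t) = 0 := by
  have hprim := ZMod.isPrimitive_stdAddChar n
  have hne : mulShift (ZMod.stdAddChar (N := n)) a ≠ 1 := hprim ha
  have hne0 : mulShift (ZMod.stdAddChar (N := n)) a ≠ 0 := by
    rwa [AddChar.ne_zero_iff, ← AddChar.ne_one_iff]
  have := AddChar.sum_eq_zero_iff_ne_zero.2 hne0
  simpa [AddChar.mulShift_apply] using this

lemma aux_det_circulant (n : ℕ) [NeZero n] (v : ZMod n → ℂ) :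
    (circulant v).det = ∏ t : ZMod n, ∑ a : ZMod n, v a * ZMod.stdAddChar (a * t) := by
  classical
  set ψ : AddChar (ZMod n) ℂ := ZMod.stdAddChar with hψdef
  set W : Matrix (ZMod n) (ZMod n) ℂ := Matrix.of fun i t => ψ (i * t) with hW
  set d : ZMod n → ℂ := fun t => ∑ a : ZMod n, v a * ψ (-(a * t)) with hd
  have key : circulant v * W = W * Matrix.diagonal d := by
    ext i t
    rw [Matrix.mul_apply, Matrix.mul_diagonal]
    calc ∑ j, circulant v i j * W j t
        = ∑ a, v a * ψ ((i - a) * t) := by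
          refine Fintype.sum_equiv (Equiv.subLeft i) _ _ fun a => ?_
          simp [circulant_apply, hW, Equiv.subLeft]
      _ = W i t * d t := by
          rw [hd, hW, Matrix.of_apply, Finset.mul_sum]
          refine Finset.sum_congr rfl fun a _ => ?_
          rw [← mul_assoc, mul_comm (ψ (i*t)) (v a), mul_assoc, ← AddChar.map_add_eq_mul]
          ring_nf
  have hWdet : W.det ≠ 0 := by
    set W' : Matrix (ZMod n) (ZMod n) ℂ := Matrix.of fun t j => ψ (-(t * j)) with hW'
    have hWW' : W * W' = (n : ℂ) • 1 := by
      ext i j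
      rw [Matrix.mul_apply]
      have : ∀ t : ZMod n, W i t * W' t j = ψ ((i - j) * t) := by
        intro t
        rw [hW, hW', Matrix.of_apply, Matrix.of_apply, ← AddChar.map_add_eq_mul]
        ring_nf
      rw [Finset.sum_congr rfl fun t _ => this t]
      by_cases hij : i = j
      · subst hij
        simp [ZMod.card]
      · have : (i - j) ≠ 0 := sub_ne_zero.2 hij
        rw [aux_sum_char n this]
        simp [Matrix.one_apply, hij]
    intro h
    have := congrArg Matrix.det hWW'
    rw [Matrix.det_mul, h, zero_mul] at this
    have hcard : Fintype.card (ZMod n) = n := ZMod.card n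
    rw [Matrix.det_smul, Matrix.det_one, mul_one, hcard] at this
    exact (pow_ne_zero n (Nat.cast_ne_zero.2 (NeZero.ne n)) this.symm)
  have hdet : (circulant v).det * W.det = W.det * (Matrix.diagonal d).det := by
    rw [← Matrix.det_mul, ← Matrix.det_mul, key]
  have h1 : (circulant v).det = ∏ t : ZMod n, d t := by
    rw [mul_comm (W.det)] at hdet
    have := mul_right_cancel₀ hWdet hdet
    rw [this, Matrix.det_diagonal]
  rw [h1]
  refine Fintype.prod_equiv (Equiv.neg (ZMod n)) _ _ fun t => ?_
  simp only [hd, Equiv.neg_apply]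
  refine Finset.sum_congr rfl fun a _ => ?_
  congr 1
  ring_nf

lemma aux_char2 (n : ℕ) [Fact n.Prime] (hodd : Odd n) : ringChar (ZMod n) ≠ 2 := by
  rw [ZMod.ringChar_zmod_n]
  rintro rfl
  exact (Nat.not_odd_iff_even.2 (by norm_num)) hodd

lemma aux_counts (n : ℕ) [Fact n.Prime] (hodd : Odd n) (A B : Finset (ZMod n))
    (hA : ∀ t, t ∈ A ↔ t ≠ 0 ∧ quadraticChar (ZMod n) t = 1)
    (hB : ∀ t, t ∈ B ↔ t ≠ 0 ∧ quadraticChar (ZMod n) t ≠ 1) :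
    A.card = (n - 1) / 2 ∧ B.card = (n - 1) / 2 := by
  classical
  have hc2 := aux_char2 n hodd
  have hsum := quadraticChar_sum_zero hc2
  have hdisj : Disjoint A B := by
    rw [Finset.disjoint_left]
    intro t htA htB
    exact ((hB t).1 htB).2 ((hA t).1 htA).2
  have hunion : A ∪ B = Finset.univ.erase 0 := by
    ext t
    simp only [Finset.mem_union, hA t, hB t, Finset.mem_erase, Finset.mem_univ, and_true]
    by_cases h0 : t = 0
    · simp [h0]
    · simp [h0]
      tauto
  have hsum' : ∑ t ∈ A ∪ B, quadraticChar (ZMod n) t = 0 := by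
    rw [hunion, Finset.sum_erase _ (by simp)]
    exact hsum
  rw [Finset.sum_union hdisj] at hsum'
  have hA1 : ∑ t ∈ A, quadraticChar (ZMod n) t = (A.card : ℤ) := by
    rw [Finset.sum_congr rfl (fun t ht => ((hA t).1 ht).2)]
    simp
  have hB1 : ∑ t ∈ B, quadraticChar (ZMod n) t = ∑ _t ∈ B, (-1 : ℤ) := by
    refine Finset.sum_congr rfl fun t ht => ?_
    rcases quadraticChar_dichotomy ((hB t).1 ht).1 with h | h
    · exact absurd h ((hB t).1 ht).2
    · exact h
  rw [hA1, hB1, Finset.sum_const] at hsum'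
  have hAB : A.card = B.card := by
    simp only [nsmul_eq_mul, mul_neg_one] at hsum'
    omega
  have hABtot : A.card + B.card = n - 1 := by
    rw [← Finset.card_union_of_disjoint hdisj, hunion,
      Finset.card_erase_of_mem (by simp), Finset.card_univ, ZMod.card]
  omega

lemma aux_main (n : ℕ) [Fact n.Prime]
    (c : ZMod n → ℤ)
    (hc : ∀ a : ZMod n, c a = if a ≠ 0 ∧ ¬ ∃ b : ZMod n, b ^ 2 = a then 1 else 0) :
    ∀ t : ZMod n, t ≠ 0 →
      ∑ a : ZMod n, ((c a : ℂ)) * ZMod.stdAddChar (a * t) =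
        (-1 - ((quadraticChar (ZMod n)).ringHomComp (Int.castRingHom ℂ)) t *
          gaussSum ((quadraticChar (ZMod n)).ringHomComp (Int.castRingHom ℂ))
            (ZMod.stdAddChar (N := n))) / 2 := by
  classical
  intro t ht
  set ψ : AddChar (ZMod n) ℂ := ZMod.stdAddChar with hψdef
  set χ : MulChar (ZMod n) ℂ := (quadraticChar (ZMod n)).ringHomComp (Int.castRingHom ℂ)
    with hχdef
  set g : ℂ := gaussSum χ ψ with hgdef
  have hχap : ∀ a : ZMod n, χ a = ((quadraticChar (ZMod n) a : ℤ) : ℂ) := fun a => rfl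
  have hpt : ∀ a : ZMod n, ((c a : ℂ)) * ψ (a * t) =
      (1 - χ a) / 2 * ψ (a * t) - (if a = 0 then (1/2 : ℂ) else 0) := by
    intro a
    by_cases h0 : a = 0
    · subst h0
      have hc0 : c 0 = 0 := by rw [hc]; simp
      simp [hc0, hχap, AddChar.map_zero_eq_one]
    · rcases quadraticChar_dichotomy h0 with h | h
      · have hsq : IsSquare a := (quadraticChar_one_iff_isSquare h0).1 h
        obtain ⟨r, hr⟩ := hsq
        have hca : c a = 0 := by
          rw [hc]
          simp only [ite_eq_right_iff]
          intro hcontr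
          exact absurd ⟨r, by rw [sq]; exact hr.symm⟩ hcontr.2
        simp [hca, hχap, h, h0]
      · have hnsq : ¬ IsSquare a := (quadraticChar_neg_one_iff_not_isSquare).1 h
        have hca : c a = 1 := by
          rw [hc, if_pos]
          refine ⟨h0, fun ⟨b, hb⟩ => hnsq ⟨b, by rw [← hb, sq]⟩⟩
        rw [hca, hχap, h, if_neg h0]
        push_cast
        ring
  rw [Finset.sum_congr rfl fun a _ => hpt a]
  rw [Finset.sum_sub_distrib]
  have hsum1 : ∑ a : ZMod n, (if a = 0 then (1/2 : ℂ) else 0) = 1/2 := by simp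
  have hsum2 : ∑ a : ZMod n, ψ (a * t) = 0 := by
    rw [Finset.sum_congr rfl fun a _ => by rw [mul_comm]]
    exact aux_sum_char n ht
  have hsum3 : ∑ a : ZMod n, χ a * ψ (a * t) = χ t * g := by
    have hmul : ∑ a : ZMod n, χ a * ψ (a * t) = gaussSum χ (mulShift ψ t) := by
      unfold gaussSum
      refine Finset.sum_congr rfl fun a _ => ?_
      rw [AddChar.mulShift_apply, mul_comm t a]
    have hG := gaussSum_mulShift χ ψ (Units.mk0 t ht)
    have hsq : χ t * χ t = 1 := by
      rw [hχap]
      have := quadraticChar_sq_one ht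
      rw [← Int.cast_mul, ← sq, this]
      norm_num
    rw [hmul]
    simp only [Units.val_mk0] at hG
    calc gaussSum χ (mulShift ψ t) = (χ t * χ t) * gaussSum χ (mulShift ψ t) := by
          rw [hsq, one_mul]
      _ = χ t * (χ t * gaussSum χ (mulShift ψ t)) := by ring
      _ = χ t * g := by rw [hG]
  have hsplit : ∑ a : ZMod n, (1 - χ a) / 2 * ψ (a * t)
      = (∑ a : ZMod n, ψ (a * t)) / 2 - (∑ a : ZMod n, χ a * ψ (a * t)) / 2 := by
    have hterm : ∀ a : ZMod n, (1 - χ a) / 2 * ψ (a * t)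
        = ψ (a * t) / 2 - (χ a * ψ (a * t)) / 2 := fun a => by ring
    rw [Finset.sum_congr rfl fun a _ => hterm a, Finset.sum_sub_distrib,
      ← Finset.sum_div, ← Finset.sum_div]
  rw [hsplit, hsum1, hsum2, hsum3]
  ring

lemma aux_key (n : ℕ) [Fact n.Prime] (hodd : Odd n)
    (c : ZMod n → ℤ)
    (hc : ∀ a : ZMod n, c a = if a ≠ 0 ∧ ¬ ∃ b : ZMod n, b ^ 2 = a then 1 else 0) :
    (((Matrix.circulant c).det : ℤ) : ℂ) =
      (((n - 1) / 2 : ℕ) : ℂ) *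
        ((1 - gaussSum ((quadraticChar (ZMod n)).ringHomComp (Int.castRingHom ℂ))
            (ZMod.stdAddChar (N := n)) ^ 2) / 4) ^ ((n - 1) / 2) := by
  classical
  set ψ : AddChar (ZMod n) ℂ := ZMod.stdAddChar with hψdef
  set χ : MulChar (ZMod n) ℂ := (quadraticChar (ZMod n)).ringHomComp (Int.castRingHom ℂ)
    with hχdef
  set g : ℂ := gaussSum χ ψ with hgdef
  set m : ℕ := (n - 1) / 2 with hmdef
  -- cast the determinant to ℂ
  have hcast : (((Matrix.circulant c).det : ℤ) : ℂ)
      = (circulant (fun a : ZMod n => ((c a : ℂ)))).det := by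
    have h := RingHom.map_det (Int.castRingHom ℂ) (circulant c)
    rw [RingHom.mapMatrix_apply, Matrix.map_circulant] at h
    exact h
  rw [hcast, aux_det_circulant n]
  -- separate the t = 0 factor
  rw [← Finset.mul_prod_erase Finset.univ _ (Finset.mem_univ (0 : ZMod n))]
  -- the t = 0 factor equals m
  have h0 : ∑ a : ZMod n, ((c a : ℂ)) * ZMod.stdAddChar (a * 0) = (m : ℂ) := by
    have hψ0 : ∀ a : ZMod n, ZMod.stdAddChar (N := n) (a * 0) = 1 := by
      intro a; rw [mul_zero]; exact AddChar.map_zero_eq_one _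
    rw [Finset.sum_congr rfl fun a _ => by rw [hψ0 a, mul_one]]
    have hpt : ∀ a : ZMod n, ((c a : ℂ))
        = if a ≠ 0 ∧ quadraticChar (ZMod n) a ≠ 1 then 1 else 0 := by
      intro a
      by_cases h0' : a = 0
      · subst h0'; rw [hc]; simp
      · rcases quadraticChar_dichotomy h0' with h | h
        · have hsq : IsSquare a := (quadraticChar_one_iff_isSquare h0').1 h
          obtain ⟨r, hr⟩ := hsq
          have hca : c a = 0 := by
            rw [hc]
            simp only [ite_eq_right_iff]
            intro hcontr
            exact absurd ⟨r, by rw [sq]; exact hr.symm⟩ hcontr.2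
          rw [hca, if_neg]
          · simp
          · rintro ⟨-, hq⟩; exact hq h
        · have hnsq : ¬ IsSquare a := (quadraticChar_neg_one_iff_not_isSquare).1 h
          have hca : c a = 1 := by
            rw [hc, if_pos]
            refine ⟨h0', fun ⟨b, hb⟩ => hnsq ⟨b, by rw [← hb, sq]⟩⟩
          rw [hca, if_pos ⟨h0', by rw [h]; norm_num⟩]
          norm_num
    rw [Finset.sum_congr rfl fun a _ => hpt a, Finset.sum_boole]
    have hcnt := (aux_counts n hodd
      (Finset.univ.filter (fun t : ZMod n => t ≠ 0 ∧ quadraticChar (ZMod n) t = 1))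
      (Finset.univ.filter (fun t : ZMod n => t ≠ 0 ∧ quadraticChar (ZMod n) t ≠ 1))
      (fun t => by simp) (fun t => by simp)).2
    rw [hcnt]
  rw [h0]
  congr 1
  have hχap : ∀ a : ZMod n, χ a = ((quadraticChar (ZMod n) a : ℤ) : ℂ) := fun a => rfl
  have hF : ∀ t ∈ Finset.univ.erase (0 : ZMod n),
      ∑ a : ZMod n, ((c a : ℂ)) * ZMod.stdAddChar (a * t)
        = if quadraticChar (ZMod n) t = 1 then (-1 - g)/2 else (-1 + g)/2 := by
    intro t ht
    have ht0 : t ≠ 0 := Finset.ne_of_mem_erase ht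
    rw [aux_main n c hc t ht0]
    by_cases h : quadraticChar (ZMod n) t = 1
    · rw [if_pos h]
      have hχt : χ t = 1 := by rw [hχap, h]; norm_num
      rw [← hgdef, hχt]
      ring
    · rw [if_neg h]
      have hq : quadraticChar (ZMod n) t = -1 := by
        rcases quadraticChar_dichotomy ht0 with h' | h'
        · exact absurd h' h
        · exact h'
      have hχt : χ t = -1 := by rw [hχap, hq]; norm_num
      rw [← hgdef, hχt]
      ring
  rw [Finset.prod_congr rfl hF, Finset.prod_ite]
  simp only [Finset.prod_const]
  have hcnt := aux_counts n hodd
    ((Finset.univ.erase (0 : ZMod n)).filter (fun t => quadraticChar (ZMod n) t = 1))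
    ((Finset.univ.erase (0 : ZMod n)).filter (fun t => ¬ quadraticChar (ZMod n) t = 1))
    (fun t => by simp [and_comm]) (fun t => by simp [and_comm])
  rw [hcnt.1, hcnt.2, ← hmdef, ← mul_pow]
  congr 1
  ring

/-- the determinant of the integer circulant matrix of the indicator of
quadratic nonresidues modulo an odd prime `n`. -/
theorem stmt2 (n : ℕ) [Fact n.Prime] (hodd : Odd n)
    (c : ZMod n → ℤ)
    (hc : ∀ a : ZMod n, c a = if a ≠ 0 ∧ ¬ ∃ b : ZMod n, b ^ 2 = a then 1 else 0) :
    (∀ k : ℕ, n = 4 * k + 1 →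
        (Matrix.circulant c).det = 2 * (k : ℤ) * (k : ℤ) ^ ((n - 1) / 2)) ∧
    (∀ k : ℕ, n = 4 * k + 3 →
        (Matrix.circulant c).det = (2 * (k : ℤ) + 1) * ((k : ℤ) + 1) ^ ((n - 1) / 2)) := by
  classical
  have hp : n.Prime := Fact.out
  set χ : MulChar (ZMod n) ℂ := (quadraticChar (ZMod n)).ringHomComp (Int.castRingHom ℂ)
    with hχdef
  set g : ℂ := gaussSum χ (ZMod.stdAddChar (N := n)) with hgdef
  have h1 : χ ≠ 1 :=
    (MulChar.ringHomComp_ne_one_iff (f := Int.castRingHom ℂ)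
      (by exact Int.cast_injective)).2 (quadraticChar_ne_one (aux_char2 n hodd))
  have h2 : χ.IsQuadratic := (quadraticChar_isQuadratic (ZMod n)).comp _
  have h3 : (ZMod.stdAddChar (N := n)).IsPrimitive := ZMod.isPrimitive_stdAddChar n
  have hg2 : g ^ 2 = χ (-1) * (n : ℂ) := by
    have h := gaussSum_sq h1 h2 h3
    rwa [ZMod.card] at h
  have hkey := aux_key n hodd c hc
  rw [← hχdef, ← hgdef] at hkey
  have hne0 : (-1 : ZMod n) ≠ 0 := by
    simpa using neg_ne_zero.2 (one_ne_zero (α := ZMod n))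
  have hχap : χ (-1) = ((quadraticChar (ZMod n) (-1) : ℤ) : ℂ) := rfl
  constructor
  · intro k hk
    have hcard : Fintype.card (ZMod n) % 4 ≠ 3 := by rw [ZMod.card]; omega
    have hsq : IsSquare (-1 : ZMod n) := FiniteField.isSquare_neg_one_iff.2 hcard
    have hqneg : quadraticChar (ZMod n) (-1) = 1 :=
      (quadraticChar_one_iff_isSquare hne0).2 hsq
    have hχneg : χ (-1) = 1 := by rw [hχap, hqneg]; norm_num
    have hg2' : g ^ 2 = (n : ℂ) := by rw [hg2, hχneg, one_mul]
    have hm : (n - 1) / 2 = 2 * k := by omega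
    have hval : ((1 : ℂ) - g ^ 2) / 4 = -(k : ℂ) := by
      rw [hg2']
      have : (n : ℂ) = 4 * k + 1 := by exact_mod_cast congrArg (Nat.cast (R := ℂ)) hk
      rw [this]; ring
    rw [hval, hm] at hkey
    have hfin : ((Matrix.circulant c).det : ℂ)
        = ((2 * (k : ℤ) * (k : ℤ) ^ (2 * k) : ℤ) : ℂ) := by
      rw [hkey, Even.neg_pow ⟨k, by ring⟩]
      push_cast
      ring
    have := Int.cast_injective (α := ℂ) hfin
    rw [hm]
    exact this
  · intro k hk
    have hnsq : ¬ IsSquare (-1 : ZMod n) := by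
      rw [FiniteField.isSquare_neg_one_iff, ZMod.card]
      omega
    have hqneg : quadraticChar (ZMod n) (-1) = -1 :=
      quadraticChar_neg_one_iff_not_isSquare.2 hnsq
    have hχneg : χ (-1) = -1 := by rw [hχap, hqneg]; norm_num
    have hg2' : g ^ 2 = -(n : ℂ) := by rw [hg2, hχneg]; ring
    have hm : (n - 1) / 2 = 2 * k + 1 := by omega
    have hval : ((1 : ℂ) - g ^ 2) / 4 = (k : ℂ) + 1 := by
      rw [hg2']
      have : (n : ℂ) = 4 * k + 3 := by exact_mod_cast congrArg (Nat.cast (R := ℂ)) hk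
      rw [this]; ring
    rw [hval, hm] at hkey
    have hfin : ((Matrix.circulant c).det : ℂ)
        = (((2 * (k : ℤ) + 1) * ((k : ℤ) + 1) ^ (2 * k + 1) : ℤ) : ℂ) := by
      rw [hkey]
      push_cast
      ring
    have := Int.cast_injective (α := ℂ) hfin
    rw [hm]
    exact this
end

section
/- Let q = p^d be a prime power, let n be an odd prime, and let v : ZMod n → F_q be the arithmetic logarithm. Then v is a most complicated point for every translation-invariant linear operator A on F_q^n if and only if: either n = 4k+3 for some natural number k with gcd(q, k+1) = 1 and gcd(q, 2k+1) = 1, or n = 4k+1 for some natural number k with gcd(q, 2k) = 1. -/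
open Function Polynomial Finset

set_option linter.unusedSectionVars false
set_option linter.unusedVariables false

section AlgebraSetup

variable {F : Type} [Field F] {n : ℕ} [NeZero n]

/-- identification of the group algebra with functions -/
noncomputable def LL (F : Type) [Field F] (n : ℕ) [NeZero n] :
    AddMonoidAlgebra F (ZMod n) ≃ₗ[F] (ZMod n → F) :=
  (AddMonoidAlgebra.coeffLinearEquiv F).trans (Finsupp.linearEquivFunOnFinite F F (ZMod n))

lemma LL_apply (x : AddMonoidAlgebra F (ZMod n)) (i : ZMod n) : LL F n x i = x.coeff i := rfl

lemma LL_symm_apply (y : ZMod n → F) (i : ZMod n) : ((LL F n).symm y).coeff i = y i := rfl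

/-- multiplication operator -/
noncomputable def mulOp (F : Type) [Field F] (n : ℕ) [NeZero n]
    (r : AddMonoidAlgebra F (ZMod n)) : (ZMod n → F) →ₗ[F] (ZMod n → F) :=
  (LL F n).toLinearMap ∘ₗ (LinearMap.mulLeft F r) ∘ₗ (LL F n).symm.toLinearMap

lemma mulOp_apply (r : AddMonoidAlgebra F (ZMod n)) (y : ZMod n → F) :
    mulOp F n r y = LL F n (r * (LL F n).symm y) := rfl

lemma shiftOp_eq : shiftOp F n = mulOp F n (AddMonoidAlgebra.single (-1) 1) := by
  apply LinearMap.ext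
  intro y
  funext i
  simp only [shiftOp, LinearMap.coe_mk, AddHom.coe_mk, mulOp_apply, LL_apply,
    AddMonoidAlgebra.coeff_single_mul_apply, one_mul, LL_symm_apply]
  rw [neg_neg, add_comm]

lemma mulOp_mul (r r' : AddMonoidAlgebra F (ZMod n)) :
    mulOp F n r ∘ₗ mulOp F n r' = mulOp F n (r * r') := by
  ext y
  simp [mulOp_apply, mul_assoc]

lemma mulOp_iterate (r : AddMonoidAlgebra F (ZMod n)) (m : ℕ) (y : ZMod n → F) :
    (fun z => mulOp F n r z)^[m] y = mulOp F n (r ^ m) y := by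
  induction m with
  | zero => simp [mulOp_apply]
  | succ m ih =>
      rw [Function.iterate_succ_apply', ih, pow_succ']
      simp [mulOp_apply, mul_assoc]

lemma single_one_eq_pow (a : ZMod n) :
    (AddMonoidAlgebra.single a (1:F)) = AddMonoidAlgebra.single (-1 : ZMod n) (1:F) ^ ((-a).val) := by
  rw [AddMonoidAlgebra.single_pow, one_pow]
  congr 1
  rw [nsmul_eq_mul, mul_neg_one, ZMod.natCast_val, ZMod.cast_id, neg_neg]

lemma eq_mulOp_of_comm (A : (ZMod n → F) →ₗ[F] (ZMod n → F))
    (h : A ∘ₗ shiftOp F n = shiftOp F n ∘ₗ A) :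
    A = mulOp F n ((LL F n).symm (A (LL F n 1))) := by
  set r := (LL F n).symm (A (LL F n 1)) with hr
  set e : AddMonoidAlgebra F (ZMod n) := AddMonoidAlgebra.single (-1) 1 with he
  have hcomm : ∀ y, A (mulOp F n e y) = mulOp F n e (A y) := by
    intro y
    have := LinearMap.congr_fun h y
    rw [shiftOp_eq] at this
    simpa [he] using this
  have hpow : ∀ m y, A (mulOp F n (e ^ m) y) = mulOp F n (e ^ m) (A y) := by
    intro m
    induction m with
    | zero => intro y; simp [mulOp_apply]
    | succ m ih =>
        intro y
        have h1 : (e : AddMonoidAlgebra F (ZMod n)) ^ (m+1) = e * e ^ m := by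
          rw [pow_succ']
        have h2 : ∀ z, mulOp F n (e * e ^ m) z = mulOp F n e (mulOp F n (e ^ m) z) := by
          intro z
          rw [← mulOp_mul]; rfl
        rw [h1, h2, hcomm, ih, h2]
  have hsingle : ∀ (a : ZMod n) y,
      A (mulOp F n (AddMonoidAlgebra.single a 1) y)
        = mulOp F n (AddMonoidAlgebra.single a 1) (A y) := by
    intro a y
    rw [single_one_eq_pow (F := F) a, ← he]
    exact hpow _ y
  have hAval : ∀ a : ZMod n, A (LL F n (AddMonoidAlgebra.single a 1))
      = LL F n (AddMonoidAlgebra.single a 1 * r) := by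
    intro a
    have h1 : LL F n (AddMonoidAlgebra.single a 1)
        = mulOp F n (AddMonoidAlgebra.single a 1) (LL F n 1) := by
      rw [mulOp_apply, LinearEquiv.symm_apply_apply, mul_one]
    rw [h1, hsingle, mulOp_apply]
  apply LinearMap.ext
  intro y
  set x : AddMonoidAlgebra F (ZMod n) := (LL F n).symm y with hx
  have hdec : y = LL F n x := ((LL F n).apply_symm_apply y).symm
  have hsmul : ∀ a : ZMod n, AddMonoidAlgebra.single a (x.coeff a)
      = x.coeff a • AddMonoidAlgebra.single a (1:F) := by
    intro a
    rw [AddMonoidAlgebra.smul_single, smul_eq_mul, mul_one]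
  have hAy : A y = ∑ a ∈ x.coeff.support, x.coeff a • LL F n (AddMonoidAlgebra.single a 1 * r) := by
    conv_lhs => rw [hdec, ← AddMonoidAlgebra.sum_coeff_single x]
    rw [Finsupp.sum, map_sum, map_sum]
    refine Finset.sum_congr rfl fun a _ => ?_
    rw [hsmul a, map_smul, map_smul]
    rw [hAval]
  have hmul : mulOp F n r y = ∑ a ∈ x.coeff.support, x.coeff a • LL F n (AddMonoidAlgebra.single a 1 * r) := by
    rw [mulOp_apply, ← hx, mul_comm]
    conv_lhs => rw [← AddMonoidAlgebra.sum_coeff_single x]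
    rw [Finsupp.sum, Finset.sum_mul, map_sum]
    refine Finset.sum_congr rfl fun a _ => ?_
    rw [hsmul a, smul_mul_assoc, map_smul]
  rw [hAy, hmul]

end AlgebraSetup

section Dynamics

variable {F : Type} [Field F] [Fintype F] {n : ℕ} [NeZero n]

lemma exists_pow_eq (r : AddMonoidAlgebra F (ZMod n)) :
    ∃ s t, 1 ≤ t ∧ r ^ (s + t) = r ^ s := by
  haveI : Finite (AddMonoidAlgebra F (ZMod n)) := Finite.of_equiv _ (LL F n).symm.toEquiv
  obtain ⟨a, b, hab, heq⟩ := Finite.exists_ne_map_eq_of_infinite (fun m : ℕ => r ^ m)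
  rcases lt_or_gt_of_ne hab with h | h
  · exact ⟨a, b - a, by omega, by rw [Nat.add_sub_cancel' h.le]; exact heq.symm⟩
  · exact ⟨b, a - b, by omega, by rw [Nat.add_sub_cancel' h.le]; exact heq⟩

lemma sup_eq_self_of_max {S : Type*} [Fintype S] (f : S → ℕ) (v : S)
    (h : ∀ y, f y ≤ f v) : f v = Finset.univ.sup f :=
  le_antisymm (Finset.le_sup (Finset.mem_univ v)) (Finset.sup_le fun y _ => h y)

lemma iterate_mulOp (r : AddMonoidAlgebra F (ZMod n)) (m : ℕ) (y : ZMod n → F) :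
    (fun z => mulOp F n r z)^[m] y = LL F n (r ^ m * (LL F n).symm y) :=
  mulOp_iterate r m y

lemma mostComplicated_of_unit {v' : AddMonoidAlgebra F (ZMod n)} (hu : IsUnit v')
    (r : AddMonoidAlgebra F (ZMod n)) :
    MostComplicated (fun y => mulOp F n r y) (LL F n v') := by
  set T := fun y => mulOp F n r y with hT
  have key : ∀ s t, T^[s + t] (LL F n v') = T^[s] (LL F n v') ↔ r ^ (s + t) = r ^ s := by
    intro s t
    rw [iterate_mulOp, iterate_mulOp, LinearEquiv.symm_apply_apply]
    constructor
    · intro hh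
      have h2 := (LL F n).injective hh
      have h3 : v' * r ^ (s + t) = v' * r ^ s := by
        rw [mul_comm v' _, mul_comm v' _]; exact h2
      exact hu.mul_left_cancel h3
    · intro hh; rw [hh]
  have keyy : ∀ (y : ZMod n → F) s t, r ^ (s + t) = r ^ s → T^[s + t] y = T^[s] y := by
    intro y s t hh
    rw [iterate_mulOp, iterate_mulOp, hh]
  obtain ⟨s₀, t₀, ht₀, hpow⟩ := exists_pow_eq (F := F) (n := n) r
  constructor
  · refine sup_eq_self_of_max (fun y => orbitPeriod T y) (LL F n v') ?_
    intro y
    apply Nat.sInf_le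
    have hmem : orbitPeriod T (LL F n v') ∈
        {t | 1 ≤ t ∧ ∃ s, T^[s + t] (LL F n v') = T^[s] (LL F n v')} := by
      apply Nat.sInf_mem
      exact ⟨t₀, ht₀, s₀, (key s₀ t₀).mpr hpow⟩
    obtain ⟨h1, s, hs⟩ := hmem
    exact ⟨h1, s, keyy y s _ ((key s _).mp hs)⟩
  · refine sup_eq_self_of_max (fun y => orbitPreperiod T y) (LL F n v') ?_
    intro y
    apply Nat.sInf_le
    have hmem : orbitPreperiod T (LL F n v') ∈
        {s | ∃ t, 1 ≤ t ∧ T^[s + t] (LL F n v') = T^[s] (LL F n v')} := by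
      apply Nat.sInf_mem
      exact ⟨s₀, t₀, ht₀, (key s₀ t₀).mpr hpow⟩
    obtain ⟨t, h1, hs⟩ := hmem
    exact ⟨t, h1, keyy y _ t ((key _ t).mp hs)⟩

lemma idem_pow {R : Type*} [Monoid R] {ε : R} (hid : ε * ε = ε) :
    ∀ t, 1 ≤ t → ε ^ t = ε := by
  intro t ht
  induction t with
  | zero => omega
  | succ m ih =>
      rcases Nat.eq_or_lt_of_le ht with h | h
      · rw [← h, pow_one]
      · rw [pow_succ, ih (by omega), hid]

lemma not_mostComplicated_of_idem {v' ε₀ : AddMonoidAlgebra F (ZMod n)}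
    (hid : ε₀ * ε₀ = ε₀) (hfix : ε₀ * v' = v') (hne : 1 - ε₀ ≠ 0) :
    ¬ MostComplicated (fun y => mulOp F n ε₀ y) (LL F n v') := by
  set T := fun y => mulOp F n ε₀ y with hT
  intro hMC
  have hker : ε₀ * (1 - ε₀) = 0 := by rw [mul_sub, mul_one, hid, sub_self]
  have h1 : orbitPreperiod T (LL F n v') = 0 := by
    apply Nat.sInf_eq_zero.mpr
    left
    refine ⟨1, le_refl 1, ?_⟩
    show T^[0 + 1] _ = T^[0] _
    rw [iterate_mulOp, iterate_mulOp, LinearEquiv.symm_apply_apply, pow_one, pow_zero, one_mul,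
      hfix]
  set w := LL F n (1 - ε₀) with hw
  have hTw : ∀ t, 1 ≤ t → T^[t] w = LL F n 0 := by
    intro t ht
    rw [hw, iterate_mulOp, LinearEquiv.symm_apply_apply, idem_pow hid t ht, hker]
  have h2 : orbitPreperiod T w = 1 := by
    have h0 : (0 : ℕ) ∉ {s | ∃ t, 1 ≤ t ∧ T^[s + t] w = T^[s] w} := by
      rintro ⟨t, ht, hW⟩
      rw [zero_add, hTw t ht, Function.iterate_zero_apply, hw] at hW
      have := (LL F n).injective hW
      exact hne this.symm
    have h1' : (1 : ℕ) ∈ {s | ∃ t, 1 ≤ t ∧ T^[s + t] w = T^[s] w} := by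
      exact ⟨1, le_refl 1, by rw [hTw 2 (by omega), hTw 1 (by omega)]⟩
    have hle := Nat.sInf_le h1'
    have hnz : sInf {s | ∃ t, 1 ≤ t ∧ T^[s + t] w = T^[s] w} ≠ 0 := by
      intro hzero
      rcases Nat.sInf_eq_zero.mp hzero with hc | hc
      · exact h0 hc
      · rw [hc] at h1'; exact h1'
    have hdef : orbitPreperiod T w = sInf {s | ∃ t, 1 ≤ t ∧ T^[s + t] w = T^[s] w} := rfl
    omega
  have h3 : (1 : ℕ) ≤ Finset.univ.sup (fun y => orbitPreperiod T y) := by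
    calc (1:ℕ) = orbitPreperiod T w := h2.symm
      _ ≤ _ := Finset.le_sup (Finset.mem_univ w)
  rw [hMC.2] at h1
  rw [h1] at h3
  exact Nat.not_succ_le_zero 0 h3

end Dynamics

section Idem

lemma exists_idem' {F : Type} [Field F] {n : ℕ} [NeZero n] (hn : (n : F) ≠ 0)
    {v' : AddMonoidAlgebra F (ZMod n)} (hnu : ¬ IsUnit v') :
    ∃ ε₀ : AddMonoidAlgebra F (ZMod n), ε₀ * ε₀ = ε₀ ∧ ε₀ * v' = v' ∧ 1 - ε₀ ≠ 0 := by
  haveI : NeZero ((Fintype.card (ZMod n) : F)) := by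
    rw [ZMod.card]; exact ⟨hn⟩
  haveI : NeZero ((Nat.card (ZMod n) : F)) := by
    rw [Nat.card_eq_fintype_card]; assumption
  haveI hss : IsSemisimpleRing (AddMonoidAlgebra F (ZMod n)) := inferInstance
  set I : Ideal (AddMonoidAlgebra F (ZMod n)) := Ideal.span {v'} with hI
  obtain ⟨J, hJ⟩ := ComplementedLattice.exists_isCompl (I : Submodule (AddMonoidAlgebra F (ZMod n)) (AddMonoidAlgebra F (ZMod n)))
  have hsup : I ⊔ J = ⊤ := codisjoint_iff.mp hJ.codisjoint
  have hinf : I ⊓ J = ⊥ := disjoint_iff.mp hJ.disjoint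
  have h1 : (1 : AddMonoidAlgebra F (ZMod n)) ∈ I ⊔ J := by rw [hsup]; trivial
  obtain ⟨ε, hεI, w, hwJ, hsum⟩ := Submodule.mem_sup.mp h1
  have hfix : ∀ x ∈ I, x * ε = x := by
    intro x hxI
    have hw0 : x * w = 0 := by
      have hmemI : x * w ∈ I := by
        have := I.smul_mem w hxI
        rwa [smul_eq_mul, mul_comm] at this
      have hmemJ : x * w ∈ J := by
        have := J.smul_mem x hwJ
        rwa [smul_eq_mul] at this
      have : x * w ∈ I ⊓ J := ⟨hmemI, hmemJ⟩
      rwa [hinf] at this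
    have : x * (ε + w) = x * 1 := by rw [hsum]
    rw [mul_add, hw0, add_zero, mul_one] at this
    exact this
  have hvI : v' ∈ I := Ideal.subset_span (Set.mem_singleton v')
  refine ⟨ε, hfix ε hεI, ?_, ?_⟩
  · rw [mul_comm]; exact hfix v' hvI
  · intro hcon
    have hε1 : ε = 1 := by
      have : (1 : AddMonoidAlgebra F (ZMod n)) - ε = 0 := hcon
      linear_combination -this
    apply hnu
    rw [← Ideal.span_singleton_eq_top (α := AddMonoidAlgebra F (ZMod n))]
    rw [Ideal.eq_top_iff_one, ← hI]
    rw [← hε1]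
    exact hεI

end Idem

section Counting

variable (n : ℕ) [Fact n.Prime]

open Classical in
noncomputable def nsF : Finset (ZMod n) :=
  Finset.univ.filter (fun a => a ≠ 0 ∧ ¬ ∃ b : ZMod n, b ^ 2 = a)

open Classical in
noncomputable def sqF : Finset (ZMod n) :=
  Finset.univ.filter (fun a => a ≠ 0 ∧ ∃ b : ZMod n, b ^ 2 = a)

variable {n}

lemma exists_sq_iff (a : ZMod n) : (∃ b : ZMod n, b ^ 2 = a) ↔ IsSquare a := by
  constructor
  · rintro ⟨b, rfl⟩; exact ⟨b, sq b⟩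
  · rintro ⟨r, rfl⟩; exact ⟨r, by rw [sq]⟩

lemma mem_nsF {a : ZMod n} : a ∈ nsF n ↔ quadraticChar (ZMod n) a = -1 := by
  rw [nsF, Finset.mem_filter]
  simp only [Finset.mem_univ, true_and, exists_sq_iff]
  constructor
  · rintro ⟨h0, hns⟩; exact quadraticChar_neg_one_iff_not_isSquare.mpr hns
  · intro h
    have hns := quadraticChar_neg_one_iff_not_isSquare.mp h
    exact ⟨fun h0 => hns (h0 ▸ IsSquare.zero), hns⟩

lemma mem_sqF {a : ZMod n} : a ∈ sqF n ↔ quadraticChar (ZMod n) a = 1 := by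
  rw [sqF, Finset.mem_filter]
  simp only [Finset.mem_univ, true_and, exists_sq_iff]
  constructor
  · rintro ⟨h0, hs⟩; exact (quadraticChar_one_iff_isSquare h0).mpr hs
  · intro h
    have h0 : a ≠ 0 := by
      rintro rfl
      rw [quadraticChar_zero] at h
      norm_num at h
    exact ⟨h0, (quadraticChar_one_iff_isSquare h0).mp h⟩

lemma univ_decomp :
    (Finset.univ : Finset (ZMod n)) = (sqF n ∪ nsF n) ∪ {0} := by
  ext a
  simp only [Finset.mem_univ, Finset.mem_union, Finset.mem_singleton, mem_sqF, mem_nsF, true_iff]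
  by_cases h0 : a = 0
  · right; exact h0
  · left; exact quadraticChar_dichotomy h0

lemma disj1 : Disjoint (sqF n) (nsF n) := by
  rw [Finset.disjoint_left]
  intro a ha hb
  rw [mem_sqF] at ha; rw [mem_nsF] at hb
  rw [ha] at hb; norm_num at hb

lemma disj2 : Disjoint (sqF n ∪ nsF n) ({0} : Finset (ZMod n)) := by
  rw [Finset.disjoint_right]
  intro a ha hb
  rw [Finset.mem_singleton] at ha
  subst ha
  rcases Finset.mem_union.mp hb with h | h
  · rw [mem_sqF, quadraticChar_zero] at h; norm_num at h
  · rw [mem_nsF, quadraticChar_zero] at h; norm_num at h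

lemma card_sum_eq : (sqF n).card + (nsF n).card + 1 = n := by
  have h := congrArg Finset.card (univ_decomp (n := n))
  rw [Finset.card_univ, ZMod.card, Finset.card_union_of_disjoint disj2,
    Finset.card_union_of_disjoint disj1, Finset.card_singleton] at h
  omega

lemma card_eq_card (hodd : Odd n) : (sqF n).card = (nsF n).card := by
  have h2 : ringChar (ZMod n) ≠ 2 := by
    rw [ZMod.ringChar_zmod_n]
    intro h; rw [h] at hodd; exact (Nat.not_odd_iff_even.mpr even_two) hodd
  have hsum := quadraticChar_sum_zero (F := ZMod n) h2
  rw [univ_decomp, Finset.sum_union disj2, Finset.sum_union disj1] at hsum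
  have e1 : ∑ a ∈ sqF n, quadraticChar (ZMod n) a = ((sqF n).card : ℤ) := by
    rw [Finset.sum_congr rfl (fun a ha => mem_sqF.mp ha), Finset.sum_const, nsmul_eq_mul, mul_one]
  have e2 : ∑ a ∈ nsF n, quadraticChar (ZMod n) a = -((nsF n).card : ℤ) := by
    rw [Finset.sum_congr rfl (fun a ha => mem_nsF.mp ha), Finset.sum_const, nsmul_eq_mul]
    ring
  have e3 : ∑ a ∈ ({0} : Finset (ZMod n)), quadraticChar (ZMod n) a = 0 := by
    rw [Finset.sum_singleton, quadraticChar_zero]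
  rw [e1, e2, e3] at hsum
  have : ((sqF n).card : ℤ) = ((nsF n).card : ℤ) := by omega
  exact_mod_cast this

lemma card_nsF (hodd : Odd n) : (nsF n).card = (n - 1) / 2 := by
  have h1 := card_sum_eq (n := n)
  have h2 := card_eq_card (n := n) hodd
  omega

lemma card_sqF (hodd : Odd n) : (sqF n).card = (n - 1) / 2 := by
  rw [card_eq_card hodd, card_nsF hodd]

end Counting

section NNCount

variable (n : ℕ) [Fact n.Prime]

open Classical in
noncomputable def NN (s : ZMod n) : ℕ :=
  (((sqF n) ×ˢ (nsF n)).filter (fun ab => ab.1 + ab.2 = s)).card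

variable {n}

lemma chi_inv {u : ZMod n} (hu : u ≠ 0) :
    quadraticChar (ZMod n) u⁻¹ = quadraticChar (ZMod n) u := by
  have h1 : quadraticChar (ZMod n) u * quadraticChar (ZMod n) u⁻¹ = 1 := by
    rw [← map_mul, mul_inv_cancel₀ hu, map_one]
  rcases quadraticChar_dichotomy hu with h | h <;> rw [h] at h1 ⊢ <;> omega

lemma NN_smul {u : ZMod n} (s : ZMod n) (hu : u ≠ 0) : NN n (u * s) = NN n s := by
  classical
  have hui : u⁻¹ ≠ 0 := inv_ne_zero hu
  rcases quadraticChar_dichotomy hu with h1 | h1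
  · -- u is a square
    rw [NN, NN]
    apply Finset.card_bij' (i := fun ab _ => (u⁻¹ * ab.1, u⁻¹ * ab.2))
      (j := fun cd _ => (u * cd.1, u * cd.2))
    · rintro ⟨a, b⟩ hmem
      rw [Finset.mem_filter, Finset.mem_product] at hmem ⊢
      obtain ⟨⟨ha, hb⟩, hsum⟩ := hmem
      refine ⟨⟨?_, ?_⟩, ?_⟩
      · rw [mem_sqF] at ha ⊢; rw [map_mul, chi_inv hu, h1, ha, one_mul]
      · rw [mem_nsF] at hb ⊢; rw [map_mul, chi_inv hu, h1, hb, one_mul]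
      · show u⁻¹ * a + u⁻¹ * b = s
        rw [← mul_add, hsum, inv_mul_cancel_left₀ hu]
    · rintro ⟨c, d⟩ hmem
      rw [Finset.mem_filter, Finset.mem_product] at hmem ⊢
      obtain ⟨⟨hc, hd⟩, hsum⟩ := hmem
      refine ⟨⟨?_, ?_⟩, ?_⟩
      · rw [mem_sqF] at hc ⊢; rw [map_mul, h1, hc, one_mul]
      · rw [mem_nsF] at hd ⊢; rw [map_mul, h1, hd, one_mul]
      · show u * c + u * d = u * s
        rw [← mul_add, hsum]
    · rintro ⟨a, b⟩ _
      show (u * (u⁻¹ * a), u * (u⁻¹ * b)) = (a, b)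
      rw [mul_inv_cancel_left₀ hu, mul_inv_cancel_left₀ hu]
    · rintro ⟨c, d⟩ _
      show (u⁻¹ * (u * c), u⁻¹ * (u * d)) = (c, d)
      rw [inv_mul_cancel_left₀ hu, inv_mul_cancel_left₀ hu]
  · -- u is a nonsquare : swap components
    rw [NN, NN]
    apply Finset.card_bij' (i := fun ab _ => (u⁻¹ * ab.2, u⁻¹ * ab.1))
      (j := fun cd _ => (u * cd.2, u * cd.1))
    · rintro ⟨a, b⟩ hmem
      rw [Finset.mem_filter, Finset.mem_product] at hmem ⊢
      obtain ⟨⟨ha, hb⟩, hsum⟩ := hmem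
      refine ⟨⟨?_, ?_⟩, ?_⟩
      · rw [mem_nsF] at hb; rw [mem_sqF, map_mul, chi_inv hu, h1, hb]; norm_num
      · rw [mem_sqF] at ha; rw [mem_nsF, map_mul, chi_inv hu, h1, ha]; norm_num
      · show u⁻¹ * b + u⁻¹ * a = s
        rw [← mul_add, add_comm b a, hsum, inv_mul_cancel_left₀ hu]
    · rintro ⟨c, d⟩ hmem
      rw [Finset.mem_filter, Finset.mem_product] at hmem ⊢
      obtain ⟨⟨hc, hd⟩, hsum⟩ := hmem
      refine ⟨⟨?_, ?_⟩, ?_⟩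
      · rw [mem_nsF] at hd; rw [mem_sqF, map_mul, h1, hd]; norm_num
      · rw [mem_sqF] at hc; rw [mem_nsF, map_mul, h1, hc]; norm_num
      · show u * d + u * c = u * s
        rw [← mul_add, add_comm d c, hsum]
    · rintro ⟨a, b⟩ _
      show (u * (u⁻¹ * a), u * (u⁻¹ * b)) = (a, b)
      rw [mul_inv_cancel_left₀ hu, mul_inv_cancel_left₀ hu]
    · rintro ⟨c, d⟩ _
      show (u⁻¹ * (u * c), u⁻¹ * (u * d)) = (c, d)
      rw [inv_mul_cancel_left₀ hu, inv_mul_cancel_left₀ hu]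

lemma NN_const {s : ZMod n} (hs : s ≠ 0) : NN n s = NN n 1 := by
  have := NN_smul (u := s) 1 hs
  rwa [mul_one] at this

lemma NN_total : ∑ s : ZMod n, NN n s = (sqF n).card * (nsF n).card := by
  classical
  rw [← Finset.card_product]
  symm
  rw [Finset.card_eq_sum_card_fiberwise
    (f := fun ab : ZMod n × ZMod n => ab.1 + ab.2) (t := Finset.univ)
    (fun ab _ => Finset.mem_univ _)]
  refine Finset.sum_congr rfl fun s _ => ?_
  rw [NN]

lemma NN_zero_of_one (h4 : n % 4 ≠ 3) : NN n 0 = 0 := by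
  classical
  rw [NN, Finset.card_eq_zero, Finset.eq_empty_iff_forall_notMem]
  rintro ⟨a, b⟩ hmem
  rw [Finset.mem_filter, Finset.mem_product] at hmem
  obtain ⟨⟨ha, hb⟩, hsum⟩ := hmem
  have hba : b = -a := eq_neg_of_add_eq_zero_right hsum
  have hneg1 : quadraticChar (ZMod n) (-1) = 1 := by
    have hne : (-1 : ZMod n) ≠ 0 := by
      intro h
      have : (1 : ZMod n) = 0 := by linear_combination -h
      exact one_ne_zero this
    exact (quadraticChar_one_iff_isSquare hne).mpr (ZMod.exists_sq_eq_neg_one_iff.mpr h4)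
  rw [mem_nsF] at hb
  rw [mem_sqF] at ha
  rw [hba] at hb
  have : quadraticChar (ZMod n) (-a) = 1 := by
    have : (-a : ZMod n) = (-1) * a := by ring
    rw [this, map_mul, hneg1, ha, one_mul]
  rw [this] at hb
  norm_num at hb

lemma NN_zero_of_three (hodd : Odd n) (h4 : n % 4 = 3) : NN n 0 = (n - 1) / 2 := by
  classical
  rw [← card_sqF hodd]
  have hneg1 : quadraticChar (ZMod n) (-1) = -1 := by
    refine quadraticChar_neg_one_iff_not_isSquare.mpr ?_
    intro hsq
    exact (ZMod.exists_sq_eq_neg_one_iff.mp hsq) h4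
  rw [NN]
  symm
  apply Finset.card_bij' (i := fun a _ => ((a, -a) : ZMod n × ZMod n))
    (j := fun ab _ => ab.1)
  · intro a ha
    rw [Finset.mem_filter, Finset.mem_product]
    refine ⟨⟨ha, ?_⟩, by show a + (-a) = 0; ring⟩
    rw [mem_sqF] at ha
    rw [mem_nsF]
    have : (-a : ZMod n) = (-1) * a := by ring
    rw [this, map_mul, hneg1, ha, mul_one]
  · rintro ⟨a, b⟩ hmem
    rw [Finset.mem_filter, Finset.mem_product] at hmem
    exact hmem.1.1
  · intro a _; rfl
  · rintro ⟨a, b⟩ hmem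
    rw [Finset.mem_filter, Finset.mem_product] at hmem
    have : b = -a := eq_neg_of_add_eq_zero_right hmem.2
    show (a, -a) = (a, b)
    rw [this]

lemma NN_one (hodd : Odd n) : NN n 1 = n / 4 := by
  classical
  have hprime : n.Prime := Fact.out
  have hn2 : 2 ≤ n := hprime.two_le
  have hmod2 : n % 2 = 1 := Nat.odd_iff.mp hodd
  have htot := NN_total (n := n)
  have hsplit := Finset.add_sum_erase (Finset.univ : Finset (ZMod n)) (NN n)
    (Finset.mem_univ (0 : ZMod n))
  rw [← hsplit] at htot
  have herase : ∑ x ∈ (Finset.univ : Finset (ZMod n)).erase 0, NN n x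
      = ∑ _x ∈ (Finset.univ : Finset (ZMod n)).erase 0, NN n 1 :=
    Finset.sum_congr rfl (fun s hs => NN_const (Finset.mem_erase.mp hs).1)
  rw [herase, Finset.sum_const, Finset.card_erase_of_mem (Finset.mem_univ (0 : ZMod n)),
    Finset.card_univ, ZMod.card, smul_eq_mul, card_sqF hodd, card_nsF hodd] at htot
  set M := NN n 1 with hM
  have h4 : n % 4 = 1 ∨ n % 4 = 3 := by omega
  rcases h4 with h4 | h4
  · have h0 : NN n 0 = 0 := NN_zero_of_one (by omega)
    set k := n / 4 with hk
    have e2 : (n - 1) / 2 = 2 * k := by omega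
    have e1 : n - 1 = 4 * k := by omega
    rw [h0, zero_add, e2, e1] at htot
    have e3 : 2 * k * (2 * k) = 4 * k * k := by ring
    rw [e3] at htot
    have hkpos : 0 < 4 * k := by omega
    exact Nat.eq_of_mul_eq_mul_left hkpos htot
  · have h0 : NN n 0 = (n - 1) / 2 := NN_zero_of_three hodd h4
    set k := n / 4 with hk
    have e2 : (n - 1) / 2 = 2 * k + 1 := by omega
    have e1 : n - 1 = 4 * k + 2 := by omega
    rw [h0, e2, e1] at htot
    have key : (2 * k + 1) * (2 * M + 1) = (2 * k + 1) * (2 * k + 1) := by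
      have hh : (2 * k + 1) * (2 * M + 1) = (2 * k + 1) + (4 * k + 2) * M := by ring
      rw [hh, htot]
    have := Nat.eq_of_mul_eq_mul_left (show 0 < 2 * k + 1 by omega) key
    omega

end NNCount

section HomEval

variable {F : Type} [Field F] {n : ℕ} [Fact n.Prime]

/-- the group-algebra element corresponding to the arithmetic logarithm -/
noncomputable def varith (F : Type) [Field F] (n : ℕ) [Fact n.Prime] :
    AddMonoidAlgebra F (ZMod n) :=
  ∑ a ∈ nsF n, AddMonoidAlgebra.single a (1 : F)

lemma LL_varith {v : ZMod n → F}
    (hv : ∀ a : ZMod n, v a = if a ≠ 0 ∧ ¬ ∃ b : ZMod n, b ^ 2 = a then 1 else 0) :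
    LL F n (varith F n) = v := by
  classical
  funext i
  rw [varith, map_sum, Finset.sum_apply]
  have h1 : ∀ a ∈ nsF n, LL F n (AddMonoidAlgebra.single a (1:F)) i
      = if a = i then (1:F) else 0 := by
    intro a _
    rw [LL_apply, AddMonoidAlgebra.coeff_single]
    exact Finsupp.single_apply
  rw [Finset.sum_congr rfl h1, Finset.sum_ite_eq' (nsF n) i (fun _ => (1:F)), hv i]
  apply if_congr _ rfl rfl
  rw [nsF, Finset.mem_filter]
  simp only [Finset.mem_univ, true_and]

variable {K : Type} [Field K]

lemma pow_mod_eq {M : Type*} [Monoid M] {ω : M} (hω : ω ^ n = 1) (m : ℕ) :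
    ω ^ (m % n) = ω ^ m := by
  conv_rhs => rw [← Nat.div_add_mod m n, pow_add, pow_mul, hω, one_pow, one_mul]

lemma single_val_smul (a : ZMod n) :
    (a.val • (1 : ZMod n)) = a := by
  rw [nsmul_eq_mul, mul_one, ZMod.natCast_val, ZMod.cast_id]

lemma psi_single (ψ : AddMonoidAlgebra F (ZMod n) →+* K) (a : ZMod n) :
    ψ (AddMonoidAlgebra.single a 1) = (ψ (AddMonoidAlgebra.single 1 1)) ^ a.val := by
  rw [← map_pow, AddMonoidAlgebra.single_pow, one_pow, single_val_smul]

lemma psi_pow_n (ψ : AddMonoidAlgebra F (ZMod n) →+* K) :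
    (ψ (AddMonoidAlgebra.single 1 1)) ^ n = 1 := by
  rw [← map_pow, AddMonoidAlgebra.single_pow, one_pow]
  have h1 : (n • (1 : ZMod n)) = 0 := by
    rw [nsmul_eq_mul, mul_one, ZMod.natCast_self]
  rw [h1, ← AddMonoidAlgebra.one_def, map_one]

lemma psi_varith (ψ : AddMonoidAlgebra F (ZMod n) →+* K) :
    ψ (varith F n) = ∑ a ∈ nsF n, (ψ (AddMonoidAlgebra.single 1 1)) ^ a.val := by
  rw [varith, map_sum]
  exact Finset.sum_congr rfl fun a _ => psi_single ψ a

lemma sum_pow_val_eq_zero {ω : K} (hωn : ω ^ n = 1) (hω1 : ω ≠ 1) :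
    ∑ a : ZMod n, ω ^ a.val = 0 := by
  have hre : ∑ a : ZMod n, ω ^ a.val = ∑ i ∈ Finset.range n, ω ^ i := by
    apply Finset.sum_nbij' (i := fun a : ZMod n => a.val) (j := fun i : ℕ => (i : ZMod n))
    · intro a _; exact Finset.mem_range.mpr (ZMod.val_lt a)
    · intro i _; exact Finset.mem_univ _
    · intro a _; simp [ZMod.natCast_val, ZMod.cast_id]
    · intro i hi; exact ZMod.val_cast_of_lt (Finset.mem_range.mp hi)
    · intro a _; rfl
  rw [hre]
  have hgeom := geom_sum_mul ω n
  rw [hωn, sub_self] at hgeom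
  rcases mul_eq_zero.mp hgeom with h | h
  · exact h
  · exact absurd (sub_eq_zero.mp h) hω1

lemma one_add_sums_eq_zero {ω : K} (hωn : ω ^ n = 1) (hω1 : ω ≠ 1) :
    (1 : K) + (∑ a ∈ sqF n, ω ^ a.val) + (∑ a ∈ nsF n, ω ^ a.val) = 0 := by
  have h := sum_pow_val_eq_zero hωn hω1
  rw [univ_decomp, Finset.sum_union disj2, Finset.sum_union disj1, Finset.sum_singleton,
    ZMod.val_zero, pow_zero] at h
  linear_combination h

lemma P0_mul_P1 {ω : K} (hωn : ω ^ n = 1) (hω1 : ω ≠ 1) :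
    (∑ a ∈ sqF n, ω ^ a.val) * (∑ a ∈ nsF n, ω ^ a.val)
      = (NN n 0 : K) - (NN n 1 : K) := by
  classical
  rw [Finset.sum_mul_sum, ← Finset.sum_product'
    (f := fun a b : ZMod n => ω ^ a.val * ω ^ b.val)]
  rw [← Finset.sum_fiberwise_of_maps_to
    (g := fun ab : ZMod n × ZMod n => ab.1 + ab.2) (t := Finset.univ)
    (fun ab _ => Finset.mem_univ _) (fun ab => ω ^ ab.1.val * ω ^ ab.2.val)]
  have hterm : ∀ a b : ZMod n, ω ^ a.val * ω ^ b.val = ω ^ ((a + b).val) := by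
    intro a b
    rw [← pow_add, ZMod.val_add, pow_mod_eq hωn]
  have inner : ∀ s₀ : ZMod n,
      ∑ ab ∈ (sqF n ×ˢ nsF n).filter (fun ab => ab.1 + ab.2 = s₀),
        ω ^ ab.1.val * ω ^ ab.2.val = (NN n s₀ : K) * ω ^ s₀.val := by
    intro s₀
    have hc : ∀ ab ∈ (sqF n ×ˢ nsF n).filter (fun ab => ab.1 + ab.2 = s₀),
        ω ^ (ab.1 : ZMod n).val * ω ^ (ab.2 : ZMod n).val = ω ^ s₀.val := by
      rintro ⟨a, b⟩ hab
      rw [Finset.mem_filter] at hab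
      rw [hterm a b, hab.2]
    rw [Finset.sum_congr rfl hc, Finset.sum_const, nsmul_eq_mul]
    rfl
  rw [Finset.sum_congr rfl (fun s₀ _ => inner s₀)]
  -- now: ∑ s₀, (NN n s₀ : K) * ω ^ s₀.val
  have hsplit : (NN n 0 : K) * ω ^ (0 : ZMod n).val
      + ∑ s₀ ∈ (Finset.univ : Finset (ZMod n)).erase 0, (NN n s₀ : K) * ω ^ s₀.val
      = ∑ s₀ : ZMod n, (NN n s₀ : K) * ω ^ s₀.val :=
    Finset.add_sum_erase (Finset.univ : Finset (ZMod n))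
      (fun s₀ => (NN n s₀ : K) * ω ^ s₀.val) (Finset.mem_univ (0 : ZMod n))
  rw [← hsplit, ZMod.val_zero, pow_zero, mul_one]
  have herase : ∑ s₀ ∈ (Finset.univ : Finset (ZMod n)).erase 0,
      (NN n s₀ : K) * ω ^ s₀.val
      = (NN n 1 : K) * ∑ s₀ ∈ (Finset.univ : Finset (ZMod n)).erase 0, ω ^ s₀.val := by
    rw [Finset.mul_sum]
    refine Finset.sum_congr rfl fun s₀ hs₀ => ?_
    rw [NN_const (Finset.mem_erase.mp hs₀).1]
  have hsum0 : ∑ s₀ ∈ (Finset.univ : Finset (ZMod n)).erase 0, ω ^ s₀.val = -1 := by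
    have h := sum_pow_val_eq_zero hωn hω1
    have h2 : ω ^ (0 : ZMod n).val + ∑ s₀ ∈ (Finset.univ : Finset (ZMod n)).erase 0, ω ^ s₀.val
        = ∑ s₀ : ZMod n, ω ^ s₀.val :=
      Finset.add_sum_erase (Finset.univ : Finset (ZMod n))
        (fun s₀ : ZMod n => ω ^ s₀.val) (Finset.mem_univ (0 : ZMod n))
    rw [h, ZMod.val_zero, pow_zero] at h2
    linear_combination h2
  rw [herase, hsum0]
  ring

end HomEval

section UnitCriterion

variable {F : Type} [Field F] {p n : ℕ} [Fact n.Prime]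

/-- exponential monoid hom associated to an n-th root of unity -/
noncomputable def expHom {K : Type} [Field K] (n : ℕ) [Fact n.Prime] {ω : K}
    (hω : ω ^ n = 1) : Multiplicative (ZMod n) →* K where
  toFun a := ω ^ (Multiplicative.toAdd a).val
  map_one' := by
    show ω ^ (Multiplicative.toAdd (1 : Multiplicative (ZMod n))).val = 1
    rw [toAdd_one, ZMod.val_zero, pow_zero]
  map_mul' a b := by
    show ω ^ (Multiplicative.toAdd (a * b)).val = _
    rw [toAdd_mul, ZMod.val_add, pow_mod_eq hω, pow_add]

lemma not_unit_of_P1_zero {K : Type} [Field K] [Algebra F K] {ω : K} (hωn : ω ^ n = 1)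
    (hP1 : ∑ a ∈ nsF n, ω ^ a.val = 0) : ¬ IsUnit (varith F n) := by
  haveI : Fact (1 < n) := ⟨(Fact.out : n.Prime).one_lt⟩
  set ψ := ((AddMonoidAlgebra.lift F K (ZMod n)) (expHom n hωn)).toRingHom with hψ
  have h1 : ψ (AddMonoidAlgebra.single 1 1) = ω := by
    show (AddMonoidAlgebra.lift F K (ZMod n)) (expHom n hωn) (AddMonoidAlgebra.single 1 1) = ω
    rw [AddMonoidAlgebra.lift_single, one_smul]
    show ω ^ (Multiplicative.toAdd (Multiplicative.ofAdd (1 : ZMod n))).val = ω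
    rw [toAdd_ofAdd, ZMod.val_one n, pow_one]
  have h2 : ψ (varith F n) = 0 := by
    rw [psi_varith ψ, h1, hP1]
  intro hu
  have h3 := hu.map ψ
  rw [h2] at h3
  exact h3.ne_zero rfl

lemma isUnit_varith (hp : p.Prime) [CharP F p] (hodd : Odd n)
    (hC1 : ¬ p ∣ (n - 1) / 2)
    (hC2 : ¬ p ∣ (if n % 4 = 3 then n / 4 + 1 else n / 4)) :
    IsUnit (varith F n) := by
  by_contra hnu
  have hne : Ideal.span {varith F n} ≠ ⊤ := fun h => hnu (Ideal.span_singleton_eq_top.mp h)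
  obtain ⟨m, hmax, hle⟩ := Ideal.exists_le_maximal _ hne
  haveI := hmax
  letI : Field (AddMonoidAlgebra F (ZMod n) ⧸ m) := Ideal.Quotient.field m
  haveI : CharP (AddMonoidAlgebra F (ZMod n) ⧸ m) p :=
    charP_of_injective_algebraMap (algebraMap F (AddMonoidAlgebra F (ZMod n) ⧸ m)).injective p
  set ψ := Ideal.Quotient.mk m with hψdef
  have hψv : ψ (varith F n) = 0 :=
    Ideal.Quotient.eq_zero_iff_mem.mpr (hle (Ideal.subset_span (Set.mem_singleton _)))
  set ω := ψ (AddMonoidAlgebra.single 1 1) with hω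
  have hωn : ω ^ n = 1 := psi_pow_n ψ
  have hval : ∑ a ∈ nsF n, ω ^ a.val = 0 := by
    rw [← psi_varith ψ, hψv]
  have hm2 : n % 2 = 1 := Nat.odd_iff.mp hodd
  have hn2 : 2 ≤ n := (Fact.out : n.Prime).two_le
  by_cases hω1 : ω = 1
  · rw [hω1] at hval
    simp only [one_pow] at hval
    rw [Finset.sum_const, nsmul_eq_mul, mul_one, card_nsF hodd] at hval
    exact hC1 ((CharP.cast_eq_zero_iff _ p _).mp hval)
  · have hprod := P0_mul_P1 hωn hω1
    rw [hval, mul_zero] at hprod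
    have hNN : (NN n 0 : AddMonoidAlgebra F (ZMod n) ⧸ m) = (NN n 1 : AddMonoidAlgebra F (ZMod n) ⧸ m) := by linear_combination -hprod
    rcases (by omega : n % 4 = 1 ∨ n % 4 = 3) with h4 | h4
    · rw [NN_zero_of_one (by omega), NN_one hodd, Nat.cast_zero] at hNN
      have hdvd : p ∣ n / 4 := (CharP.cast_eq_zero_iff _ p _).mp hNN.symm
      apply hC2
      rw [if_neg (by omega)]
      exact hdvd
    · rw [NN_zero_of_three hodd h4, NN_one hodd] at hNN
      have e : (n - 1) / 2 = (n / 4) + (n / 4 + 1) := by omega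
      rw [e, Nat.cast_add] at hNN
      have h0 : ((n / 4 + 1 : ℕ) : AddMonoidAlgebra F (ZMod n) ⧸ m) = 0 := by
        linear_combination hNN
      apply hC2
      rw [if_pos h4]
      exact (CharP.cast_eq_zero_iff _ p _).mp h0

lemma not_isUnit_varith (hp : p.Prime) [CharP F p] (hodd : Odd n)
    (h : p ∣ (n - 1) / 2 ∨ p ∣ (if n % 4 = 3 then n / 4 + 1 else n / 4)) :
    ¬ IsUnit (varith F n) := by
  have hprime : n.Prime := Fact.out
  have hm2 : n % 2 = 1 := Nat.odd_iff.mp hodd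
  have hn2 : 2 ≤ n := hprime.two_le
  rcases h with h | h
  · -- p divides (n-1)/2 : use the augmentation (trivial root of unity in F itself)
    refine not_unit_of_P1_zero (K := F) (ω := (1 : F)) (one_pow n) ?_
    simp only [one_pow]
    rw [Finset.sum_const, nsmul_eq_mul, mul_one, card_nsF hodd]
    exact (CharP.cast_eq_zero_iff F p _).mpr h
  · -- p divides the middle coefficient : use a primitive root in a splitting field
    have hc0 : (if n % 4 = 3 then n / 4 + 1 else n / 4) ≠ 0 := by
      split_ifs with h4
      · omega
      · omega
    have hclt : (if n % 4 = 3 then n / 4 + 1 else n / 4) < n := by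
      split_ifs with h4 <;> omega
    have hple : p ≤ (if n % 4 = 3 then n / 4 + 1 else n / 4) :=
      Nat.le_of_dvd (Nat.pos_of_ne_zero hc0) h
    have hpn : ¬ (p ∣ n) := by
      intro hdvd
      have := (Nat.prime_dvd_prime_iff_eq hp hprime).mp hdvd
      omega
    have hnF : (n : F) ≠ 0 := fun h0 => hpn ((CharP.cast_eq_zero_iff F p n).mp h0)
    set P : Polynomial F := Polynomial.X ^ n - Polynomial.C 1 with hP
    have hsep : P.Separable := Polynomial.separable_X_pow_sub_C 1 hnF one_ne_zero
    have hsplits := Polynomial.SplittingField.splits P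
    haveI : CharP P.SplittingField p :=
      charP_of_injective_algebraMap (algebraMap F P.SplittingField).injective p
    have hcard : Fintype.card (P.rootSet P.SplittingField) = n := by
      rw [Polynomial.card_rootSet_eq_natDegree hsep hsplits, hP,
        Polynomial.natDegree_X_pow_sub_C]
    have h2card : 1 < Fintype.card (P.rootSet P.SplittingField) := by
      rw [hcard]; exact hprime.one_lt
    obtain ⟨x, y, hxy⟩ := Fintype.exists_pair_of_one_lt_card h2card
    have hroot : ∀ z : P.rootSet P.SplittingField, (z : P.SplittingField) ^ n = 1 := by
      intro z
      have hz := (Polynomial.mem_rootSet.mp z.2).2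
      simp only [hP, map_sub, map_pow, Polynomial.aeval_X, Polynomial.aeval_C, map_one,
        sub_eq_zero] at hz
      exact hz
    have hex : ∃ ω : P.SplittingField, ω ^ n = 1 ∧ ω ≠ 1 := by
      by_cases hx1 : (x : P.SplittingField) = 1
      · refine ⟨(y : P.SplittingField), hroot y, ?_⟩
        intro hy1
        exact hxy (Subtype.ext (hx1.trans hy1.symm))
      · exact ⟨(x : P.SplittingField), hroot x, hx1⟩
    obtain ⟨ω, hωn, hω1⟩ := hex
    have hNNdiff : (NN n 0 : P.SplittingField) - (NN n 1 : P.SplittingField) = 0 := by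
      rcases (by omega : n % 4 = 1 ∨ n % 4 = 3) with h4 | h4
      · rw [NN_zero_of_one (by omega), NN_one hodd, Nat.cast_zero]
        rw [if_neg (by omega)] at h
        rw [(CharP.cast_eq_zero_iff P.SplittingField p _).mpr h]
        ring
      · rw [NN_zero_of_three hodd h4, NN_one hodd]
        have e : (n - 1) / 2 = (n / 4) + (n / 4 + 1) := by omega
        rw [e, Nat.cast_add]
        rw [if_pos h4] at h
        rw [(CharP.cast_eq_zero_iff P.SplittingField p _).mpr h]
        ring
    have hP0P1 := P0_mul_P1 (K := P.SplittingField) hωn hω1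
    rw [hNNdiff] at hP0P1
    rcases mul_eq_zero.mp hP0P1 with hP0 | hP1
    · -- P0 = 0 : twist by a nonsquare
      obtain ⟨b, hb⟩ := FiniteField.exists_nonsquare (F := ZMod n)
        (by rw [ZMod.ringChar_zmod_n]; omega)
      have hχb : quadraticChar (ZMod n) b = -1 :=
        quadraticChar_neg_one_iff_not_isSquare.mpr hb
      have hb0 : b ≠ 0 := by
        intro h0
        rw [h0, quadraticChar_zero] at hχb
        norm_num at hχb
      have hord : orderOf ω = n := by
        have hdvd := orderOf_dvd_of_pow_eq_one hωn
        rcases (hprime.eq_one_or_self_of_dvd _ hdvd) with h1 | h1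
        · exact absurd (orderOf_eq_one_iff.mp h1) hω1
        · exact h1
      set ω' := ω ^ b.val with hω'
      have hω'n : ω' ^ n = 1 := by
        rw [hω', ← pow_mul, mul_comm, pow_mul, hωn, one_pow]
      have hω'1 : ω' ≠ 1 := by
        intro h1
        have hdvd := orderOf_dvd_of_pow_eq_one h1
        rw [hord] at hdvd
        have hlt := ZMod.val_lt b
        have hne : b.val ≠ 0 := fun h0 => hb0 ((ZMod.val_eq_zero b).mp h0)
        have := Nat.le_of_dvd (Nat.pos_of_ne_zero hne) hdvd
        omega
      refine not_unit_of_P1_zero (K := P.SplittingField) hω'n ?_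
      have hre : ∑ a ∈ nsF n, ω' ^ a.val = ∑ c ∈ sqF n, ω ^ c.val := by
        apply Finset.sum_nbij' (i := fun a : ZMod n => b * a) (j := fun c : ZMod n => b⁻¹ * c)
        · intro a ha
          rw [mem_nsF] at ha
          rw [mem_sqF, map_mul, hχb, ha]
          norm_num
        · intro c hc
          rw [mem_sqF] at hc
          rw [mem_nsF, map_mul, chi_inv hb0, hχb, hc, mul_one]
        · intro a _
          rw [inv_mul_cancel_left₀ hb0]
        · intro c _
          rw [mul_inv_cancel_left₀ hb0]
        · intro a _
          rw [hω', ← pow_mul, ZMod.val_mul, pow_mod_eq hωn]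
      rw [hre]
      exact hP0
    · exact not_unit_of_P1_zero (K := P.SplittingField) hωn hP1

end UnitCriterion


/-- Theorem 1: the arithmetic logarithm (indicator of quadratic nonresidues
mod an odd prime `n`, extended by `0` elsewhere) is a most complicated point for every
translation-invariant linear operator on `F_q^n` iff either `n = 4k+3` with
`gcd(q,k+1) = gcd(q,2k+1) = 1`, or `n = 4k+1` with `gcd(q,2k) = 1`. -/
theorem stmt3 (p d q n : ℕ) (hp : p.Prime) (hd : 0 < d) (hq : q = p ^ d)
    [Fact n.Prime] (hodd : Odd n)
    (F : Type) [Field F] [Fintype F] (hF : Fintype.card F = q)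
    (v : ZMod n → F)
    (hv : ∀ a : ZMod n, v a = if a ≠ 0 ∧ ¬ ∃ b : ZMod n, b ^ 2 = a then 1 else 0) :
    (∀ A : (ZMod n → F) →ₗ[F] (ZMod n → F),
        A ∘ₗ shiftOp F n = shiftOp F n ∘ₗ A →
        MostComplicated (fun y : ZMod n → F => A y) v)
      ↔ ((∃ k : ℕ, n = 4 * k + 3 ∧ Nat.gcd q (k + 1) = 1 ∧ Nat.gcd q (2 * k + 1) = 1) ∨
         (∃ k : ℕ, n = 4 * k + 1 ∧ Nat.gcd q (2 * k) = 1)) := by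
  have hprime : n.Prime := Fact.out
  haveI : NeZero n := ⟨hprime.pos.ne'⟩
  have hm2 : n % 2 = 1 := Nat.odd_iff.mp hodd
  have hn2 : 2 ≤ n := hprime.two_le
  -- characteristic of F is p
  obtain ⟨p', hCp'⟩ := CharP.exists F
  haveI := hCp'
  have hp'prime : p'.Prime := CharP.char_is_prime F p'
  obtain ⟨m, hpp, hcard⟩ := FiniteField.card F p'
  have hpp' : p = p' := by
    have heq : p ^ d = p' ^ (m : ℕ) := by rw [← hq, ← hF, hcard]
    have hdvd : p ∣ p' ^ (m : ℕ) := by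
      rw [← heq]
      exact dvd_pow_self p hd.ne'
    exact (Nat.prime_dvd_prime_iff_eq hp hp'prime).mp (hp.dvd_of_dvd_pow hdvd)
  haveI : CharP F p := hpp' ▸ hCp'
  -- identification of v
  have hLv : LL F n (varith F n) = v := LL_varith hv
  -- translation of the right-hand side
  have hgcd : ∀ m : ℕ, (Nat.gcd q m = 1) ↔ ¬ p ∣ m := by
    intro m
    have h' : Nat.Coprime (p ^ d) m ↔ ¬ p ∣ m := by
      rw [Nat.coprime_pow_left_iff hd]
      exact hp.coprime_iff_not_dvd
    rw [hq]
    exact h'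
  have hRHSiff : ((∃ k : ℕ, n = 4 * k + 3 ∧ Nat.gcd q (k + 1) = 1 ∧ Nat.gcd q (2 * k + 1) = 1) ∨
         (∃ k : ℕ, n = 4 * k + 1 ∧ Nat.gcd q (2 * k) = 1))
      ↔ (¬ p ∣ (n - 1) / 2 ∧ ¬ p ∣ (if n % 4 = 3 then n / 4 + 1 else n / 4)) := by
    constructor
    · rintro (⟨k, hk, h1, h2⟩ | ⟨k, hk, h1⟩)
      · have h4 : n % 4 = 3 := by omega
        have hk4 : k = n / 4 := by omega
        constructor
        · have e : (n - 1) / 2 = 2 * k + 1 := by omega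
          rw [e]
          exact (hgcd _).mp h2
        · rw [if_pos h4, ← hk4]
          exact (hgcd _).mp h1
      · have h4 : n % 4 = 1 := by omega
        have hk4 : k = n / 4 := by omega
        constructor
        · have e : (n - 1) / 2 = 2 * k := by omega
          rw [e]
          exact (hgcd _).mp h1
        · rw [if_neg (by omega), ← hk4]
          intro hdvd
          exact (hgcd _).mp h1 (Dvd.dvd.mul_left hdvd 2)
    · rintro ⟨h1, h2⟩
      rcases (by omega : n % 4 = 1 ∨ n % 4 = 3) with h4 | h4
      · right
        refine ⟨n / 4, by omega, (hgcd _).mpr ?_⟩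
        have e : 2 * (n / 4) = (n - 1) / 2 := by omega
        rw [e]
        exact h1
      · left
        refine ⟨n / 4, by omega, (hgcd _).mpr ?_, (hgcd _).mpr ?_⟩
        · rw [if_pos h4] at h2
          exact h2
        · have e : 2 * (n / 4) + 1 = (n - 1) / 2 := by omega
          rw [e]
          exact h1
  rw [hRHSiff]
  constructor
  · -- most complicated for all operators implies the arithmetic conditions
    intro hLHS
    by_contra hC
    have hC' : p ∣ (n - 1) / 2 ∨ p ∣ (if n % 4 = 3 then n / 4 + 1 else n / 4) := by
      rcases not_and_or.mp hC with h | h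
      · exact Or.inl (not_not.mp h)
      · exact Or.inr (not_not.mp h)
    have hnu := not_isUnit_varith (F := F) hp hodd hC'
    have hnF : (n : F) ≠ 0 := by
      have hplt : p < n := by
        rcases hC' with h | h
        · have := Nat.le_of_dvd (by omega) h
          omega
        · have hpos : 0 < (if n % 4 = 3 then n / 4 + 1 else n / 4) := by
            split_ifs <;> omega
          have hle := Nat.le_of_dvd hpos h
          have hlt : (if n % 4 = 3 then n / 4 + 1 else n / 4) < n := by
            split_ifs <;> omega
          omega
      intro h0
      have hd1 := (CharP.cast_eq_zero_iff F p n).mp h0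
      have := (Nat.prime_dvd_prime_iff_eq hp hprime).mp hd1
      omega
    obtain ⟨ε₀, hid, hfix, hne1⟩ := exists_idem' hnF hnu
    have hcomm : mulOp F n ε₀ ∘ₗ shiftOp F n = shiftOp F n ∘ₗ mulOp F n ε₀ := by
      rw [shiftOp_eq, mulOp_mul, mulOp_mul, mul_comm]
    have hMC := hLHS (mulOp F n ε₀) hcomm
    rw [← hLv] at hMC
    exact not_mostComplicated_of_idem hid hfix hne1 hMC
  · -- the arithmetic conditions imply most complicated for all operators
    rintro ⟨h1, h2⟩
    have hu := isUnit_varith (F := F) hp hodd h1 h2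
    intro A hcommA
    have hA := eq_mulOp_of_comm A hcommA
    have hMC := mostComplicated_of_unit hu ((LL F n).symm (A (LL F n 1)))
    rw [hLv] at hMC
    have hfun : (fun y : ZMod n → F => A y)
        = (fun y => mulOp F n ((LL F n).symm (A (LL F n 1))) y) := by
      funext y
      exact LinearMap.congr_fun hA y
    rw [hfun]
    exact hMC
end

section
/- Let q be a prime power, n ≥ 1 with gcd(n, q) = 1, let B be a circulant n×n matrix over F_q, and set A = B·Δ, where Δ = δ − I and δ is the cyclic shift. Let A(y) ∈ F_q[y] be the polynomial associated with the circulant matrix A. Let x : ZMod n → F_q and F(y) = ∑_{i ∈ ZMod n} x(i) y^{val(i)}, and suppose gcd(F(y), ∑_{i=0}^{n−1} y^i) = 1 in F_q[y]. Then for all integers m, l ≥ 1: A^m x = A^l x if and only if A(y)^m ≡ A(y)^l (mod ∑_{i=0}^{n−1} y^i) in F_q[y]. -/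
open Polynomial Finset Matrix

noncomputable def pvS6 {n : ℕ} [NeZero n] {F : Type} [Field F] (v : ZMod n → F) : Polynomial F :=
  ∑ i : ZMod n, C (v i) * X ^ i.val

section aux
variable {n : ℕ} [NeZero n] {F : Type} [Field F]

omit [NeZero n] in
lemma xpow_dvd_S6 (s t : ℕ) (h : s % n = t % n) :
    ((X : Polynomial F) ^ n - 1) ∣ X ^ s - X ^ t := by
  have hs : (X : Polynomial F) ^ s = ((X : Polynomial F) ^ n) ^ (s / n) * X ^ (s % n) := by
    conv_lhs => rw [← Nat.div_add_mod s n]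
    rw [pow_add, pow_mul]
  have ht : (X : Polynomial F) ^ t = ((X : Polynomial F) ^ n) ^ (t / n) * X ^ (t % n) := by
    conv_lhs => rw [← Nat.div_add_mod t n]
    rw [pow_add, pow_mul]
  rw [hs, ht, h, ← sub_mul]
  refine Dvd.dvd.mul_right ?_ _
  have h1 := sub_dvd_pow_sub_pow ((X : Polynomial F) ^ n) 1 (s / n)
  have h2 := sub_dvd_pow_sub_pow ((X : Polynomial F) ^ n) 1 (t / n)
  simpa using dvd_sub h1 h2

lemma conv_dvd_S6 (c y : ZMod n → F) :
    ((X : Polynomial F) ^ n - 1) ∣ pvS6 ((circulant c).mulVec y) - pvS6 c * pvS6 y := by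
  have h1 : pvS6 ((circulant c).mulVec y)
      = ∑ j : ZMod n, ∑ i : ZMod n, C (c i * y j) * X ^ ((i + j).val) := by
    unfold pvS6
    simp only [Matrix.mulVec, Matrix.circulant_apply, dotProduct, map_sum, Finset.sum_mul]
    rw [Finset.sum_comm]
    refine Finset.sum_congr rfl fun j _ => ?_
    refine Fintype.sum_equiv (Equiv.subRight j) _ _ fun i => ?_
    simp only [Equiv.subRight_apply, sub_add_cancel, C_mul]
  have h2 : pvS6 c * pvS6 y
      = ∑ j : ZMod n, ∑ i : ZMod n, C (c i * y j) * X ^ (i.val + j.val) := by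
    unfold pvS6
    rw [Finset.sum_mul_sum, Finset.sum_comm]
    refine Finset.sum_congr rfl fun j _ => Finset.sum_congr rfl fun i _ => ?_
    rw [C_mul, pow_add]; ring
  rw [h1, h2, ← Finset.sum_sub_distrib]
  refine Finset.dvd_sum fun j _ => ?_
  rw [← Finset.sum_sub_distrib]
  refine Finset.dvd_sum fun i _ => ?_
  rw [← mul_sub]
  refine Dvd.dvd.mul_left (xpow_dvd_S6 _ _ ?_) _
  rw [ZMod.val_add]
  exact Nat.mod_mod_of_dvd _ dvd_rfl

lemma powconv_S6 (c y : ZMod n → F) (k : ℕ) :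
    ((X : Polynomial F) ^ n - 1) ∣
      pvS6 ((circulant c ^ k).mulVec y) - (pvS6 c) ^ k * pvS6 y := by
  induction k with
  | zero => simp
  | succ k ih =>
    rw [pow_succ', ← Matrix.mulVec_mulVec]
    have h1 := conv_dvd_S6 c ((circulant c ^ k).mulVec y)
    have h2 := Dvd.dvd.mul_left ih (pvS6 c)
    have := dvd_add h1 h2
    convert this using 1
    ring

lemma pv_degree_S6 (v : ZMod n → F) : (pvS6 v).degree < n := by
  unfold pvS6
  refine lt_of_le_of_lt (Polynomial.degree_sum_le _ _) ?_
  rw [Finset.sup_lt_iff (by exact_mod_cast WithBot.bot_lt_coe n)]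
  intro i _
  refine lt_of_le_of_lt (Polynomial.degree_C_mul_X_pow_le _ _) ?_
  exact_mod_cast i.val_lt

lemma pv_coeff_S6 (v : ZMod n → F) (i : ZMod n) : (pvS6 v).coeff i.val = v i := by
  unfold pvS6
  rw [Polynomial.finset_sum_coeff, Finset.sum_eq_single i]
  · simp
  · intro j _ hj
    rw [Polynomial.coeff_C_mul, Polynomial.coeff_X_pow, if_neg, mul_zero]
    intro hval
    apply hj
    have := congrArg (Nat.cast (R := ZMod n)) hval
    simpa [ZMod.natCast_val, ZMod.cast_id] using this.symm
  · intro h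
    exact absurd (Finset.mem_univ i) h

lemma pv_dvd_iff_S6 (u v : ZMod n → F) :
    ((X : Polynomial F) ^ n - 1) ∣ pvS6 u - pvS6 v ↔ u = v := by
  constructor
  · intro h
    have hsub : pvS6 u - pvS6 v = pvS6 (u - v) := by
      unfold pvS6
      rw [← Finset.sum_sub_distrib]
      refine Finset.sum_congr rfl fun i _ => ?_
      rw [Pi.sub_apply, C_sub, sub_mul]
    rw [hsub] at h
    have hz : pvS6 (u - v) = 0 := by
      by_contra hne
      have hdeg := Polynomial.degree_le_of_dvd h hne
      have : ((X : Polynomial F) ^ n - 1).degree = n := by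
        have := Polynomial.degree_X_pow_sub_C (Nat.pos_of_ne_zero (NeZero.ne n)) (1 : F)
        simpa using this
      rw [this] at hdeg
      exact absurd (lt_of_le_of_lt hdeg (pv_degree_S6 _)) (lt_irrefl _)
    funext i
    have h5 : (u - v) i = 0 := by rw [← pv_coeff_S6 (u - v) i, hz, Polynomial.coeff_zero]
    simpa [sub_eq_zero] using h5
  · rintro rfl; simp

end aux

/-- for `A = B·Δ` with `B` circulant and `gcd(F(y), 1+y+⋯+y^{n-1}) = 1`,
the equality `A^m x = A^l x` (for `m, l ≥ 1`) holds iff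
`A(y)^m ≡ A(y)^l (mod 1+y+⋯+y^{n-1})`. -/
theorem stmt6 (q n : ℕ) (hq : IsPrimePow q) [NeZero n] (hnq : Nat.gcd n q = 1)
    (F : Type) [Field F] [Fintype F] (hF : Fintype.card F = q)
    (b : ZMod n → F)
    (A : Matrix (ZMod n) (ZMod n) F)
    (hA : A = Matrix.circulant b *
        (Matrix.circulant (fun i : ZMod n => if i = -1 then (1 : F) else 0) - 1))
    (x : ZMod n → F)
    (hx : IsCoprime (∑ i : ZMod n, C (x i) * X ^ i.val)
        (∑ i ∈ Finset.range n, (X : Polynomial F) ^ i)) :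
    ∀ m l : ℕ, 1 ≤ m → 1 ≤ l →
      ((A ^ m).mulVec x = (A ^ l).mulVec x ↔
        (∑ i ∈ Finset.range n, (X : Polynomial F) ^ i) ∣
          ((∑ i : ZMod n, C (A i 0) * X ^ i.val) ^ m
            - (∑ i : ZMod n, C (A i 0) * X ^ i.val) ^ l)) := by
  intro m l hm hl
  set w : ZMod n → F := fun i => if i = -1 then 1 else 0 with hw
  set u : ZMod n → F := fun j => w j - Pi.single (M := fun _ : ZMod n => F) 0 1 j with hu
  set a : ZMod n → F := (circulant b).mulVec u with ha
  have hAc : A = circulant a := by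
    rw [hA, ← Matrix.circulant_single_one F (ZMod n), ← Matrix.circulant_sub,
      Matrix.circulant_mul]
    rfl
  have hAi0 : (∑ i : ZMod n, C (A i 0) * X ^ i.val) = pvS6 a := by
    unfold pvS6
    refine Finset.sum_congr rfl fun i _ => ?_
    rw [hAc, Matrix.circulant_apply, sub_zero]
  -- sum of a is zero
  have husum : ∑ j : ZMod n, u j = 0 := by
    simp only [hu, hw]
    rw [Finset.sum_sub_distrib]
    simp
  have hsum : ∑ i : ZMod n, a i = 0 := by
    calc ∑ i : ZMod n, a i = ∑ j : ZMod n, (∑ i : ZMod n, b i) * u j := by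
          rw [ha]
          simp only [Matrix.mulVec, Matrix.circulant_apply, dotProduct]
          rw [Finset.sum_comm]
          refine Finset.sum_congr rfl fun j _ => ?_
          rw [← Finset.sum_mul]
          congr 1
          exact Fintype.sum_equiv (Equiv.subRight j) _ _ fun i => rfl
      _ = 0 := by rw [← Finset.mul_sum, husum, mul_zero]
  have hroot : (X - C 1 : Polynomial F) ∣ pvS6 a := by
    rw [Polynomial.dvd_iff_isRoot]
    unfold pvS6
    simp [Polynomial.IsRoot, Polynomial.eval_finset_sum, hsum]
  -- n ≠ 0 in F
  have hn0 : (n : F) ≠ 0 := by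
    intro h0
    have hcp : CharP F (ringChar F) := ringChar.charP F
    have hprime : (ringChar F).Prime := CharP.char_is_prime F (ringChar F)
    obtain ⟨k, -, hcard⟩ := FiniteField.card F (ringChar F)
    have hd1 : ringChar F ∣ n := (CharP.cast_eq_zero_iff F (ringChar F) n).mp h0
    have hd2 : ringChar F ∣ q := by
      rw [← hF, hcard]
      exact dvd_pow_self _ (by positivity)
    have := Nat.dvd_gcd hd1 hd2
    rw [hnq, Nat.dvd_one] at this
    exact hprime.one_lt.ne' this
  set S : Polynomial F := ∑ i ∈ Finset.range n, (X : Polynomial F) ^ i with hS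
  have hgeom : S * (X - 1) = X ^ n - 1 := geom_sum_mul X n
  have hcop : IsCoprime (X - C 1 : Polynomial F) S := by
    rw [(Polynomial.irreducible_X_sub_C (1 : F)).coprime_iff_not_dvd]
    rw [Polynomial.dvd_iff_isRoot]
    simp only [Polynomial.IsRoot, hS, Polynomial.eval_finset_sum, Polynomial.eval_pow,
      Polynomial.eval_X, one_pow, Finset.sum_const, Finset.card_range, nsmul_eq_mul, mul_one]
    exact hn0
  have hXC : (X - C 1 : Polynomial F) = X - 1 := by rw [C_1]
  set D : Polynomial F := (pvS6 a) ^ m - (pvS6 a) ^ l with hD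
  have hkey : ∀ k : ℕ, ((X : Polynomial F) ^ n - 1) ∣
      pvS6 ((A ^ k).mulVec x) - (pvS6 a) ^ k * pvS6 x := by
    intro k
    rw [hAc]
    exact powconv_S6 a x k
  have hxpv : (∑ i : ZMod n, C (x i) * X ^ i.val) = pvS6 x := rfl
  rw [hAi0, hxpv] at *
  constructor
  · intro heq
    -- from vector equality to divisibility
    have h1 : ((X : Polynomial F) ^ n - 1) ∣
        pvS6 ((A ^ m).mulVec x) - pvS6 ((A ^ l).mulVec x) := by
      rw [heq]; simp
    have h2 : ((X : Polynomial F) ^ n - 1) ∣ D * pvS6 x := by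
      have hm' := hkey m
      have hl' := hkey l
      have := dvd_sub h1 (dvd_sub hm' hl')
      convert this using 1
      rw [hD]; ring
    have h3 : S ∣ D * pvS6 x := dvd_trans ⟨X - 1, hgeom.symm⟩ h2
    exact (hx.symm).dvd_of_dvd_mul_right h3
  · intro hdvd
    have hXm : (X - C 1 : Polynomial F) ∣ D := by
      rw [hD]
      exact dvd_sub (dvd_trans hroot (dvd_pow_self _ (by omega)))
        (dvd_trans hroot (dvd_pow_self _ (by omega)))
    have hfull : ((X : Polynomial F) ^ n - 1) ∣ D := by
      rw [← hgeom]
      rw [← hXC]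
      exact (hcop.symm.mul_dvd hdvd hXm)
    have h1 : ((X : Polynomial F) ^ n - 1) ∣
        pvS6 ((A ^ m).mulVec x) - pvS6 ((A ^ l).mulVec x) := by
      have hm' := hkey m
      have hl' := hkey l
      have h2 : ((X : Polynomial F) ^ n - 1) ∣ D * pvS6 x := hfull.mul_right _
      have := dvd_add (dvd_sub hm' hl') h2
      convert this using 1
      rw [hD]; ring
    exact (pv_dvd_iff_S6 _ _).mp h1
end

section
/- Let q be a prime power and n ≥ 1 with gcd(n, q) = 1. Let x : ZMod n → F_q and F(y) = ∑_{i ∈ ZMod n} x(i) y^{val(i)} ∈ F_q[y]. If gcd(F(y), ∑_{i=0}^{n−1} y^i) = 1 in F_q[y], then x is a most complicated or almost most complicated point for every linear operator A on F_q^n of the form A = B·Δ with B a translation-invariant linear operator. -/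
open Function Polynomial Finset

set_option linter.unusedSectionVars false
set_option linter.unusedVariables false

section Aux
variable {F : Type} [Field F] {n : ℕ} [NeZero n]

lemma shift_pow_apply (k : ℕ) (z : ZMod n → F) (i : ZMod n) :
    ((shiftOp F n ^ k) z) i = z (i + (k : ZMod n)) := by
  induction k generalizing z i with
  | zero => simp
  | succ k ih =>
    rw [pow_succ, Module.End.mul_apply, ih]
    show z ((i + (k : ZMod n)) + 1) = _
    congr 1
    push_cast
    ring

lemma natCast_pred_zmod : ((n - 1 : ℕ) : ZMod n) = -1 := by
  have h1 : 1 ≤ n := Nat.one_le_iff_ne_zero.mpr (NeZero.ne n)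
  push_cast [Nat.cast_sub h1]
  simp

lemma sigma_pow_apply (k : ℕ) (z : ZMod n → F) (i : ZMod n) :
    (((shiftOp F n ^ (n - 1)) ^ k) z) i = z (i - (k : ZMod n)) := by
  rw [← pow_mul, shift_pow_apply]
  congr 1
  push_cast [natCast_pred_zmod]
  ring

lemma shift_pow_n : (shiftOp F n) ^ n = 1 := by
  apply LinearMap.ext; intro z
  funext i
  rw [shift_pow_apply]
  simp [ZMod.natCast_self]

lemma sigma_pow_pred : ((shiftOp F n ^ (n - 1)) ^ (n - 1)) = shiftOp F n := by
  apply LinearMap.ext; intro z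
  funext i
  rw [sigma_pow_apply]
  show _ = z (i + 1)
  congr 1
  rw [natCast_pred_zmod]
  ring

lemma aeval_sigma_m : aeval (shiftOp F n ^ (n - 1)) ((X : F[X]) ^ n - 1) = 0 := by
  rw [map_sub, map_pow, aeval_X, map_one, sub_eq_zero, ← pow_mul, mul_comm, pow_mul,
    shift_pow_n, one_pow]

/-- the polynomial attached to a vector -/
noncomputable def pol (z : ZMod n → F) : F[X] := ∑ i : ZMod n, C (z i) * X ^ i.val

lemma aeval_apply_of_natDegree_lt {r : F[X]} {N : ℕ} (h : r.natDegree < N)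
    (z : ZMod n → F) (i : ZMod n) :
    (aeval (shiftOp F n ^ (n - 1)) r) z i = ∑ k ∈ range N, r.coeff k * z (i - (k : ZMod n)) := by
  rw [aeval_eq_sum_range' h]
  simp only [LinearMap.coe_sum, Finset.sum_apply, LinearMap.smul_apply, Pi.smul_apply,
    smul_eq_mul, sigma_pow_apply]

lemma monic_m : ((X : F[X]) ^ n - 1).Monic := by
  simpa using monic_X_pow_sub_C (1 : F) (NeZero.ne n)

lemma aeval_e_eq_zero_iff (r : F[X]) :
    aeval (shiftOp F n ^ (n - 1)) r (Pi.single (0 : ZMod n) (1 : F)) = 0 ↔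
      ((X : F[X]) ^ n - 1) ∣ r := by
  have hm : ((X : F[X]) ^ n - 1).Monic := monic_m
  constructor
  · intro h
    rw [← modByMonic_eq_zero_iff_dvd hm]
    set r0 := r %ₘ ((X : F[X]) ^ n - 1) with hr0
    have hrsum : r0 + ((X : F[X]) ^ n - 1) * (r /ₘ ((X : F[X]) ^ n - 1)) = r :=
      modByMonic_add_div r _
    have h0 : aeval (shiftOp F n ^ (n - 1)) r0 (Pi.single (0 : ZMod n) (1 : F)) = 0 := by
      have : aeval (shiftOp F n ^ (n - 1)) r0 = aeval (shiftOp F n ^ (n - 1)) r := by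
        conv_rhs => rw [← hrsum]
        rw [map_add, map_mul, aeval_sigma_m, zero_mul, add_zero]
      rw [this, h]
    have hdeg : r0.natDegree < n := by
      rcases eq_or_ne r0 0 with h' | h'
      · rw [h']; simpa using Nat.pos_of_ne_zero (NeZero.ne n)
      · rw [natDegree_lt_iff_degree_lt h']
        have := degree_modByMonic_lt r hm
        rwa [show ((X : F[X]) ^ n - 1) = X ^ n - C 1 by simp,
          degree_X_pow_sub_C (Nat.pos_of_ne_zero (NeZero.ne n))] at this
    have hc : ∀ i : ZMod n, r0.coeff i.val = 0 := by
      intro i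
      have h1 := congrFun h0 i
      rw [aeval_apply_of_natDegree_lt hdeg, Pi.zero_apply] at h1
      rw [← h1]
      rw [Finset.sum_eq_single i.val]
      · have : i - ((i.val : ℕ) : ZMod n) = 0 := by
          rw [ZMod.natCast_val, ZMod.cast_id, sub_self]
        rw [this, Pi.single_eq_same, mul_one]
      · intro k hk hne
        have hz : (Pi.single (0 : ZMod n) (1 : F) : ZMod n → F) (i - (k : ZMod n)) = 0 := by
          rw [Pi.single_apply, if_neg]
          intro hik
          apply hne
          have hki : (k : ZMod n) = i := by
            have := sub_eq_zero.mp hik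
            linear_combination -this
          rw [← hki, ZMod.val_natCast_of_lt (Finset.mem_range.mp hk)]
        rw [hz, mul_zero]
      · intro hni
        exact absurd (Finset.mem_range.mpr (ZMod.val_lt i)) hni
    apply Polynomial.ext
    intro k
    rcases lt_or_ge k n with hk | hk
    · have := hc ((k : ZMod n))
      rwa [ZMod.val_natCast_of_lt hk] at this
    · simp [coeff_eq_zero_of_natDegree_lt (lt_of_lt_of_le hdeg hk)]
  · rintro ⟨c, rfl⟩
    rw [map_mul, aeval_sigma_m, zero_mul, LinearMap.zero_apply]

lemma aeval_pol (z : ZMod n → F) :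
    aeval (shiftOp F n ^ (n - 1)) (pol z) (Pi.single (0 : ZMod n) (1 : F)) = z := by
  funext j
  rw [pol, map_sum]
  rw [LinearMap.coe_sum, Finset.sum_apply, Finset.sum_apply]
  have hterm : ∀ i : ZMod n,
      (aeval (shiftOp F n ^ (n - 1)) (C (z i) * X ^ i.val)) (Pi.single (0 : ZMod n) (1 : F)) j
        = z i * (Pi.single (0 : ZMod n) (1 : F) : ZMod n → F) (j - i) := by
    intro i
    rw [map_mul, aeval_C, map_pow, aeval_X, Module.End.mul_apply,
      Module.algebraMap_end_apply, Pi.smul_apply, smul_eq_mul, sigma_pow_apply,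
      ZMod.natCast_val, ZMod.cast_id]
  rw [Finset.sum_congr rfl (fun i _ => hterm i)]
  rw [Finset.sum_eq_single j]
  · rw [sub_self, Pi.single_eq_same, mul_one]
  · intro i _ hne
    rw [Pi.single_apply, if_neg, mul_zero]
    intro h
    exact hne (sub_eq_zero.mp h).symm
  · intro h
    exact absurd (Finset.mem_univ j) h

lemma aeval_apply_eq_zero_iff (r : F[X]) (z : ZMod n → F) :
    aeval (shiftOp F n ^ (n - 1)) r z = 0 ↔ ((X : F[X]) ^ n - 1) ∣ r * pol z := by
  conv_lhs => rw [← aeval_pol z, ← Module.End.mul_apply, ← map_mul]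
  exact aeval_e_eq_zero_iff _

lemma commutant {B : (ZMod n → F) →ₗ[F] (ZMod n → F)}
    (h : B ∘ₗ shiftOp F n = shiftOp F n ∘ₗ B) :
    ∃ p : F[X], B = aeval (shiftOp F n ^ (n - 1)) p := by
  have hc : Commute (shiftOp F n) B := by
    show shiftOp F n * B = B * shiftOp F n
    exact h.symm
  have hcs : Commute ((shiftOp F n ^ (n - 1)) : (ZMod n → F) →ₗ[F] (ZMod n → F)) B :=
    hc.pow_left (n - 1)
  have hcom : ∀ r : F[X], Commute (aeval (shiftOp F n ^ (n - 1)) r) B := by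
    intro r
    induction r using Polynomial.induction_on with
    | C a => simpa using (Algebra.commute_algebraMap_left a B)
    | add p q hp hq => simpa [map_add] using hp.add_left hq
    | monomial a k _ =>
      rw [map_mul, map_pow, aeval_X, aeval_C]
      exact (Algebra.commute_algebraMap_left k B).mul_left (hcs.pow_left (a + 1))
  refine ⟨pol (B (Pi.single (0 : ZMod n) (1 : F))), ?_⟩
  apply LinearMap.ext
  intro z
  conv_lhs => rw [← aeval_pol z]
  rw [← Module.End.mul_apply, ← (hcom (pol z)).eq, Module.End.mul_apply,
    ← aeval_pol (B (Pi.single (0 : ZMod n) (1 : F))), ← Module.End.mul_apply, ← map_mul,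
    mul_comm, map_mul, Module.End.mul_apply, aeval_pol]
  rw [aeval_pol (B (Pi.single (0 : ZMod n) (1 : F)))]

end Aux

theorem stmt7 (q n : ℕ) (hq : IsPrimePow q) [NeZero n] (hnq : Nat.gcd n q = 1)
    (F : Type) [Field F] [Fintype F] (hF : Fintype.card F = q)
    (x : ZMod n → F)
    (hx : IsCoprime (∑ i : ZMod n, C (x i) * X ^ i.val)
        (∑ i ∈ Finset.range n, (X : Polynomial F) ^ i)) :
    ∀ B : (ZMod n → F) →ₗ[F] (ZMod n → F),
      B ∘ₗ shiftOp F n = shiftOp F n ∘ₗ B →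
      MostComplicated (fun y : ZMod n → F => (B ∘ₗ (shiftOp F n - LinearMap.id)) y) x ∨
      AlmostMostComplicated (fun y : ZMod n → F => (B ∘ₗ (shiftOp F n - LinearMap.id)) y) x := by
  intro B hB
  classical
  obtain ⟨p, hp⟩ := commutant hB
  set σ : (ZMod n → F) →ₗ[F] (ZMod n → F) := shiftOp F n ^ (n - 1) with hσ
  set a : F[X] := p * (X ^ (n - 1) - 1) with ha
  set m : F[X] := X ^ n - 1 with hm
  set g : F[X] := ∑ i ∈ Finset.range n, (X : F[X]) ^ i with hg
  set T : (ZMod n → F) → (ZMod n → F) :=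
    fun y => (B ∘ₗ (shiftOp F n - LinearMap.id)) y with hT
  have hx' : IsCoprime (pol x) g := hx
  have hgm : g * (X - 1) = m := geom_sum_mul X n
  have hmonic : m.Monic := monic_m
  have hm0 : m ≠ 0 := hmonic.ne_zero
  have hnpos : 0 < n := Nat.pos_of_ne_zero (NeZero.ne n)
  -- T as polynomial in σ
  have hTa : B ∘ₗ (shiftOp F n - LinearMap.id) = aeval σ a := by
    rw [ha, map_mul, ← hp, map_sub, map_pow, aeval_X, map_one, sigma_pow_pred,
      Module.End.mul_eq_comp, Module.End.one_eq_id]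
  have hit : ∀ (k : ℕ) (z : ZMod n → F), T^[k] z = aeval σ (a ^ k) z := by
    intro k z
    rw [map_pow, Module.End.pow_apply, ← hTa]
  have KEY : ∀ (z : ZMod n → F) (s t : ℕ),
      T^[s + t] z = T^[s] z ↔ m ∣ (a ^ (s + t) - a ^ s) * pol z := by
    intro z s t
    rw [hit, hit, ← sub_eq_zero, ← LinearMap.sub_apply, ← map_sub]
    exact aeval_apply_eq_zero_iff _ z
  -- polynomial arithmetic
  set d : F[X] := EuclideanDomain.gcd m a with hd
  obtain ⟨m', hmm'⟩ : d ∣ m := EuclideanDomain.gcd_dvd_left m a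
  have hda : d ∣ a := EuclideanDomain.gcd_dvd_right m a
  have hsq : Squarefree m := by
    have hchar : (n : F) ≠ 0 := by
      haveI hP : CharP F (ringChar F) := ringChar.charP F
      have hprime : (ringChar F).Prime := CharP.char_is_prime F (ringChar F)
      obtain ⟨k, -, hcard⟩ := FiniteField.card F (ringChar F)
      intro h0
      have hdn : ringChar F ∣ n := (CharP.cast_eq_zero_iff F (ringChar F) n).mp h0
      have hdq : ringChar F ∣ q := by
        rw [← hF, hcard]
        exact dvd_pow_self _ (Nat.pos_iff_ne_zero.mp k.pos)
      have h1 : ringChar F ∣ 1 := hnq ▸ Nat.dvd_gcd hdn hdq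
      exact hprime.ne_one (Nat.dvd_one.mp h1)
    have hsep := (separable_X_pow_sub_C (1 : F) hchar one_ne_zero).squarefree
    rw [Polynomial.C_1] at hsep
    exact hsep
  have hX1ne : (X - 1 : F[X]) ≠ 0 := by
    rw [← Polynomial.C_1]
    exact Polynomial.X_sub_C_ne_zero 1
  have hX1m : (X - 1 : F[X]) ∣ m := ⟨g, by rw [← hgm]; ring⟩
  have hX1a : (X - 1 : F[X]) ∣ a :=
    ⟨p * ∑ i ∈ Finset.range (n - 1), (X : F[X]) ^ i, by
      rw [ha, ← geom_sum_mul X (n - 1)]; ring⟩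
  have hX1d : (X - 1 : F[X]) ∣ d := EuclideanDomain.dvd_gcd hX1m hX1a
  have hm'g : m' ∣ g := by
    obtain ⟨d', hd'⟩ := hX1d
    have hcan : g * (X - 1) = (d' * m') * (X - 1) := by
      rw [hgm, hmm', hd']; ring
    have hg' := mul_right_cancel₀ hX1ne hcan
    exact ⟨d', by rw [hg']; ring⟩
  have hdm' : IsCoprime d m' := by
    rw [← EuclideanDomain.gcd_isUnit_iff]
    have h1 : EuclideanDomain.gcd d m' ∣ d := EuclideanDomain.gcd_dvd_left _ _
    have h2 : EuclideanDomain.gcd d m' ∣ m' := EuclideanDomain.gcd_dvd_right _ _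
    have h3 : EuclideanDomain.gcd d m' * EuclideanDomain.gcd d m' ∣ m := by
      rw [hmm']; exact mul_dvd_mul h1 h2
    exact hsq _ h3
  have hm'm : m' ∣ m := ⟨d, by rw [hmm']; ring⟩
  have hm'a : IsCoprime m' a := by
    rw [← EuclideanDomain.gcd_isUnit_iff]
    have h1 : EuclideanDomain.gcd m' a ∣ m' := EuclideanDomain.gcd_dvd_left _ _
    have h2 : EuclideanDomain.gcd m' a ∣ a := EuclideanDomain.gcd_dvd_right _ _
    have h3 : EuclideanDomain.gcd m' a ∣ d :=
      EuclideanDomain.dvd_gcd (h1.trans hm'm) h2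
    exact hdm'.isUnit_of_dvd' h3 h1
  have hm'x : IsCoprime m' (pol x) := hx'.symm.of_isCoprime_of_dvd_left hm'g
  have hm'0 : m' ≠ 0 := by
    rintro rfl
    rw [hmm', mul_zero] at hm0
    exact hm0 rfl
  obtain ⟨t0, ht01, ht0⟩ : ∃ t, 1 ≤ t ∧ m' ∣ a ^ t - 1 := by
    haveI : Module.Finite F (AdjoinRoot m') :=
      Module.Finite.of_basis (AdjoinRoot.powerBasis hm'0).basis
    haveI : Finite (AdjoinRoot m') := Module.finite_of_finite F
    obtain ⟨u, v, huv⟩ := hm'a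
    have h1 : AdjoinRoot.mk m' v * AdjoinRoot.mk m' a = 1 := by
      have h2 := congrArg (AdjoinRoot.mk m') huv
      simpa [AdjoinRoot.mk_self] using h2
    have hu : IsUnit (AdjoinRoot.mk m' a) :=
      IsUnit.of_mul_eq_one _ (by rw [mul_comm]; exact h1)
    obtain ⟨w, hw⟩ := hu
    refine ⟨orderOf w, orderOf_pos w, ?_⟩
    rw [← AdjoinRoot.mk_eq_zero, map_sub, map_pow, map_one, ← hw,
      ← Units.val_pow_eq_pow_val, pow_orderOf_eq_one, Units.val_one, sub_self]
  -- dynamics facts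
  have hPerAll : ∀ (z : ZMod n → F) (t : ℕ), 1 ≤ t → m' ∣ a ^ t - 1 →
      T^[1 + t] z = T^[1] z := by
    intro z t ht hdvd
    rw [KEY]
    have h2 : (a ^ (1 + t) - a ^ 1) * pol z = a * (a ^ t - 1) * pol z := by
      rw [pow_add]; ring
    rw [h2, hmm']
    exact hdm'.mul_dvd ((hda.mul_right _).mul_right _) ((hdvd.mul_left a).mul_right _)
  have hPerx : ∀ t : ℕ, 1 ≤ t → (∃ s, T^[s + t] x = T^[s] x) → m' ∣ a ^ t - 1 := by
    rintro t ht ⟨s, hs⟩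
    rw [KEY] at hs
    have h2 : (a ^ (s + t) - a ^ s) * pol x = (a ^ s * pol x) * (a ^ t - 1) := by
      rw [pow_add]; ring
    rw [h2] at hs
    have hcop : IsCoprime m' (a ^ s * pol x) := (hm'a.pow_right).mul_right hm'x
    exact hcop.dvd_of_dvd_mul_left (hm'm.trans hs)
  have hSx : {t | 1 ≤ t ∧ ∃ s, T^[s + t] x = T^[s] x} = {t | 1 ≤ t ∧ m' ∣ a ^ t - 1} := by
    ext t
    constructor
    · rintro ⟨ht, s, hs⟩
      exact ⟨ht, hPerx t ht ⟨s, hs⟩⟩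
    · rintro ⟨ht, hdvd⟩
      exact ⟨ht, 1, hPerAll x t ht hdvd⟩
  have hperz_sub : ∀ z : ZMod n → F,
      {t | 1 ≤ t ∧ m' ∣ a ^ t - 1} ⊆ {t | 1 ≤ t ∧ ∃ s, T^[s + t] z = T^[s] z} := by
    rintro z t ⟨ht, hdvd⟩
    exact ⟨ht, 1, hPerAll z t ht hdvd⟩
  have hPz : ∀ z : ZMod n → F, orbitPeriod T z ≤ orbitPeriod T x := by
    intro z
    simp only [orbitPeriod]
    rw [hSx]
    have hmem := Nat.sInf_mem (⟨t0, ht01, ht0⟩ : {t | 1 ≤ t ∧ m' ∣ a ^ t - 1}.Nonempty)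
    exact Nat.sInf_le (hperz_sub z hmem)
  have hper_eq : orbitPeriod T x = univ.sup (fun y => orbitPeriod T y) :=
    le_antisymm (Finset.le_sup (f := fun y => orbitPeriod T y) (mem_univ x))
      (Finset.sup_le fun z _ => hPz z)
  have hPreAll : ∀ z : ZMod n → F, orbitPreperiod T z ≤ 1 := by
    intro z
    apply Nat.sInf_le
    exact ⟨t0, ht01, hPerAll z t0 ht01 ht0⟩
  have hzero_iff : (∃ t, 1 ≤ t ∧ T^[0 + t] x = T^[0] x) ↔ d ∣ pol x := by
    constructor
    · rintro ⟨t, ht, hdvd⟩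
      rw [KEY] at hdvd
      have h2 : (a ^ (0 + t) - a ^ 0) * pol x = (a ^ t - 1) * pol x := by
        rw [zero_add, pow_zero]
      rw [h2] at hdvd
      have hdat : d ∣ a ^ t := hda.trans (dvd_pow_self a (by omega))
      have hcop : IsCoprime d (a ^ t - 1) :=
        IsCoprime.of_isCoprime_of_dvd_left ⟨1, -1, by ring⟩ hdat
      exact hcop.dvd_of_dvd_mul_left (dvd_trans (⟨m', hmm'⟩ : d ∣ m) hdvd)
    · intro hdp
      refine ⟨t0, ht01, ?_⟩
      rw [KEY]
      have h2 : (a ^ (0 + t0) - a ^ 0) * pol x = (a ^ t0 - 1) * pol x := by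
        rw [zero_add, pow_zero]
      rw [h2, hmm']
      exact hdm'.mul_dvd (hdp.mul_left _) (ht0.mul_right _)
  have hsup1 : univ.sup (fun y => orbitPreperiod T y) ≤ 1 :=
    Finset.sup_le fun z _ => hPreAll z
  by_cases hcase : d ∣ pol x
  · right
    refine ⟨hper_eq, ?_⟩
    have h0 : orbitPreperiod T x = 0 := by
      simp only [orbitPreperiod]
      exact Nat.sInf_eq_zero.mpr (Or.inl (hzero_iff.mpr hcase))
    rw [h0]
    omega
  · left
    refine ⟨hper_eq, ?_⟩
    have h1 : orbitPreperiod T x = 1 := by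
      have hle := hPreAll x
      have hne : orbitPreperiod T x ≠ 0 := by
        simp only [orbitPreperiod]
        intro h0
        rcases Nat.sInf_eq_zero.mp h0 with h | h
        · exact hcase (hzero_iff.mp h)
        · have hmem1 : (1 : ℕ) ∈ {s | ∃ t, 1 ≤ t ∧ T^[s + t] x = T^[s] x} :=
            ⟨t0, ht01, hPerAll x t0 ht01 ht0⟩
          rw [h] at hmem1
          exact hmem1
      omega
    have hsup2 : orbitPreperiod T x ≤ univ.sup (fun y => orbitPreperiod T y) :=
      Finset.le_sup (f := fun y => orbitPreperiod T y) (mem_univ x)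
    omega
end

section
/- Let q be a prime power and n ≥ 1 with gcd(n, q) = 1. Let x : ZMod n → F_q with ∑_{i ∈ ZMod n} x(i) = 0 and F(y) = ∑_{i ∈ ZMod n} x(i) y^{val(i)}, and suppose gcd(F(y), ∑_{i=0}^{n−1} y^i) = 1 in F_q[y]. Let B be a circulant n×n matrix over F_q with associated polynomial B(y), and A = B·Δ. Then x is a most complicated point for A if and only if gcd(B(y), ∑_{i=0}^{n−1} y^i) ≠ 1 in F_q[y]. -/
open Function Polynomial Finset

/-! ### Auxiliary lemmas: conjugation invariance of orbit data -/

section Trans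
variable {S S' : Type*} (Φ : S → S') (T : S → S) (T' : S' → S')

lemma orbitPeriod_conj (hinj : Function.Injective Φ) (h : ∀ z, Φ (T z) = T' (Φ z)) (z : S) :
    orbitPeriod T' (Φ z) = orbitPeriod T z := by
  have hs : Function.Semiconj Φ T T' := h
  unfold orbitPeriod
  congr 1
  ext t
  simp only [Set.mem_setOf_eq, and_congr_right_iff]
  intro _
  constructor <;> rintro ⟨s, hs'⟩ <;> refine ⟨s, ?_⟩
  · apply hinj
    rw [hs.iterate_right (s+t) z, hs.iterate_right s z]; exact hs'
  · rw [← hs.iterate_right (s+t) z, ← hs.iterate_right s z, hs']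

lemma orbitPreperiod_conj (hinj : Function.Injective Φ) (h : ∀ z, Φ (T z) = T' (Φ z)) (z : S) :
    orbitPreperiod T' (Φ z) = orbitPreperiod T z := by
  have hs : Function.Semiconj Φ T T' := h
  unfold orbitPreperiod
  congr 1
  ext s
  simp only [Set.mem_setOf_eq]
  constructor <;> rintro ⟨t, ht, hs'⟩ <;> refine ⟨t, ht, ?_⟩
  · apply hinj
    rw [hs.iterate_right (s+t) z, hs.iterate_right s z]; exact hs'
  · rw [← hs.iterate_right (s+t) z, ← hs.iterate_right s z, hs']

lemma mostComplicated_conj [Fintype S] [Fintype S'] (hbij : Function.Bijective Φ)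
    (h : ∀ z, Φ (T z) = T' (Φ z)) (z : S) :
    MostComplicated T' (Φ z) ↔ MostComplicated T z := by
  have h1 : Finset.univ.sup (fun y => orbitPeriod T' y)
      = Finset.univ.sup (fun y => orbitPeriod T y) := by
    apply le_antisymm
    · apply Finset.sup_le
      intro y' _
      obtain ⟨y, rfl⟩ := hbij.2 y'
      rw [orbitPeriod_conj Φ T T' hbij.1 h y]
      exact Finset.le_sup (Finset.mem_univ y)
    · apply Finset.sup_le
      intro y _
      rw [← orbitPeriod_conj Φ T T' hbij.1 h y]
      exact Finset.le_sup (Finset.mem_univ (Φ y))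
  have h2 : Finset.univ.sup (fun y => orbitPreperiod T' y)
      = Finset.univ.sup (fun y => orbitPreperiod T y) := by
    apply le_antisymm
    · apply Finset.sup_le
      intro y' _
      obtain ⟨y, rfl⟩ := hbij.2 y'
      rw [orbitPreperiod_conj Φ T T' hbij.1 h y]
      exact Finset.le_sup (Finset.mem_univ y)
    · apply Finset.sup_le
      intro y _
      rw [← orbitPreperiod_conj Φ T T' hbij.1 h y]
      exact Finset.le_sup (Finset.mem_univ (Φ y))
  unfold MostComplicated
  rw [h1, h2, orbitPeriod_conj Φ T T' hbij.1 h z, orbitPreperiod_conj Φ T T' hbij.1 h z]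
end Trans

/-! ### The abstract dynamics of multiplication by `e * u` in a finite commutative ring -/

section Abstract
variable {R : Type*} [CommRing R] [Fintype R]

theorem mc_abstract (e : R) (u : Rˣ) (he : e * e = e) (hne : e ≠ 1)
    (x w : R) (hw : w * (e * x) = e) :
    MostComplicated (fun z : R => (e * ↑u) * z) x ↔ ¬ ∃ z : R, (e * ↑u) * z = x := by
  classical
  set a : R := e * ↑u with ha
  set T : R → R := fun z => a * z with hT
  have hit : ∀ (k : ℕ) (z : R), T^[k] z = a ^ k * z := by
    intro k
    induction k with
    | zero => intro z; simp
    | succ k ih =>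
      intro z
      rw [Function.iterate_succ_apply, ih, hT, pow_succ]
      ring
  have hepow : ∀ s : ℕ, 1 ≤ s → e ^ s = e := by
    intro s hs
    induction s with
    | zero => omega
    | succ s ih =>
      rcases Nat.eq_or_lt_of_le hs with h | h
      · simp [← h]
      · rw [pow_succ, ih (by omega), he]
  have hapow : ∀ s : ℕ, 1 ≤ s → a ^ s = e * (u : R) ^ s := by
    intro s hs; rw [ha, mul_pow, hepow s hs]
  set N := orderOf u with hNdef
  have hN : 1 ≤ N := orderOf_pos u
  have huN : (u : R) ^ N = 1 := by
    have h := pow_orderOf_eq_one u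
    calc (u:R) ^ N = ((u ^ N : Rˣ) : R) := by rw [Units.val_pow_eq_pow_val]
    _ = 1 := by rw [h]; rfl
  have hucan : ∀ (s : ℕ) (p r : R), (u : R) ^ s * p = (u : R) ^ s * r → p = r :=
    fun s p r h => (u.isUnit.pow s).mul_left_cancel h
  have hper : ∀ (z : R) (t : ℕ), 1 ≤ t →
      ((∃ s, T^[s + t] z = T^[s] z) ↔ e * (u : R) ^ t * z = e * z) := by
    intro z t ht
    constructor
    · rintro ⟨s, hs⟩
      rw [hit, hit] at hs
      have hs1 : a ^ (s + 1 + t) * z = a ^ (s + 1) * z := by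
        have := congrArg (fun r => a * r) hs
        calc a ^ (s + 1 + t) * z = a * (a ^ (s + t) * z) := by
              rw [← mul_assoc, ← pow_succ']; ring_nf
        _ = a * (a ^ s * z) := this
        _ = a ^ (s + 1) * z := by rw [← mul_assoc, ← pow_succ']
      rw [hapow _ (by omega), hapow _ (by omega), pow_add] at hs1
      apply hucan (s + 1)
      calc (u:R) ^ (s+1) * (e * (u:R) ^ t * z) = e * ((u:R)^(s+1) * (u:R)^t) * z := by ring
      _ = e * (u:R)^(s+1) * z := hs1
      _ = (u:R) ^ (s+1) * (e * z) := by ring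
    · intro h
      refine ⟨1, ?_⟩
      rw [hit, hit, hapow _ (by omega), hapow _ (by omega), pow_add, pow_one]
      calc e * ((u:R) * (u:R) ^ t) * z = (u:R) * (e * (u:R) ^ t * z) := by ring
      _ = (u:R) * (e * z) := by rw [h]
      _ = e * (u:R) * z := by ring
  have hperiod_mem : ∀ z : R, orbitPeriod T z ∈ {t | 1 ≤ t ∧ ∃ s, T^[s + t] z = T^[s] z} := by
    intro z
    apply Nat.sInf_mem
    refine ⟨N, hN, (hper z N hN).2 ?_⟩
    rw [huN, mul_one]
  have hkey : ∀ t : ℕ, e * (u:R) ^ t * x = e * x → (u:R) ^ t * e = e := by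
    intro t h
    have := congrArg (fun r => w * r) h
    calc (u:R) ^ t * e = (u:R)^t * (w * (e * x)) := by rw [hw]
    _ = w * (e * (u:R)^t * x) := by ring
    _ = w * (e * x) := this
    _ = e := hw
  have hpermax : Finset.univ.sup (fun y => orbitPeriod T y) = orbitPeriod T x := by
    apply le_antisymm
    · apply Finset.sup_le
      intro z _
      obtain ⟨ht1, hs⟩ := hperiod_mem x
      have hue : (u:R) ^ (orbitPeriod T x) * e = e :=
        hkey _ ((hper x _ ht1).1 hs)
      apply Nat.sInf_le
      refine ⟨ht1, (hper z _ ht1).2 ?_⟩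
      calc e * (u:R) ^ (orbitPeriod T x) * z = ((u:R) ^ (orbitPeriod T x) * e) * z := by ring
      _ = e * z := by rw [hue]
    · exact Finset.le_sup (Finset.mem_univ x)
  have hpre : ∀ z : R, orbitPreperiod T z = if e * z = z then 0 else 1 := by
    intro z
    have h1mem : 1 ∈ {s | ∃ t, 1 ≤ t ∧ T^[s + t] z = T^[s] z} := by
      refine ⟨N, hN, ?_⟩
      rw [hit, hit, hapow _ (by omega), hapow _ (by omega), pow_add, huN, mul_one, pow_one]
    have h0mem : 0 ∈ {s | ∃ t, 1 ≤ t ∧ T^[s + t] z = T^[s] z} ↔ e * z = z := by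
      constructor
      · rintro ⟨t, ht, hs⟩
        rw [hit, hit, pow_zero, one_mul, Nat.zero_add, hapow _ ht] at hs
        calc e * z = e * (e * (u:R)^t * z) := by rw [hs]
        _ = (e * e) * ((u:R)^t * z) := by ring
        _ = e * (u:R)^t * z := by rw [he]; ring
        _ = z := hs
      · intro h
        refine ⟨N, hN, ?_⟩
        rw [hit, hit, Nat.zero_add, pow_zero, one_mul, hapow _ hN, huN, mul_one, h]
    rcases eq_or_ne (e * z) z with h | h
    · rw [if_pos h]
      exact Nat.sInf_eq_zero.2 (Or.inl (h0mem.2 h))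
    · rw [if_neg h]
      apply le_antisymm (Nat.sInf_le h1mem)
      rcases Nat.eq_zero_or_pos (sInf {s | ∃ t, 1 ≤ t ∧ T^[s + t] z = T^[s] z}) with h0 | h0
      · exfalso
        rcases Nat.sInf_eq_zero.1 h0 with hmem | hempty
        · exact h (h0mem.1 hmem)
        · rw [hempty] at h1mem; exact h1mem
      · exact h0
  have hpremax : Finset.univ.sup (fun y => orbitPreperiod T y) = 1 := by
    apply le_antisymm
    · apply Finset.sup_le
      intro z _
      rw [hpre z]
      split <;> omega
    · calc 1 = orbitPreperiod T (1 : R) := by rw [hpre 1, if_neg (by rwa [mul_one])]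
      _ ≤ _ := Finset.le_sup (Finset.mem_univ (1 : R))
  have hrange : (e * x = x) ↔ ∃ z : R, a * z = x := by
    constructor
    · intro h
      refine ⟨(↑u⁻¹ : R) * x, ?_⟩
      calc a * ((↑u⁻¹ : R) * x) = e * ((u : R) * (↑u⁻¹ : R)) * x := by rw [ha]; ring
      _ = e * x := by rw [u.mul_inv, mul_one]
      _ = x := h
    · rintro ⟨z, hz⟩
      calc e * x = e * (a * z) := by rw [hz]
      _ = (e * e) * ((u:R) * z) := by rw [ha]; ring
      _ = a * z := by rw [he, ha]; ring
      _ = x := hz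
  constructor
  · rintro ⟨_, hpp⟩ ⟨z, hz⟩
    rw [hpre x, hpremax, if_pos (hrange.2 ⟨z, hz⟩)] at hpp
    omega
  · intro hnr
    refine ⟨hpermax.symm, ?_⟩
    rw [hpre x, hpremax, if_neg (fun h => hnr (hrange.1 h))]
end Abstract

/-! ### A power of any element of a finite monoid is idempotent -/

lemma exists_pow_idem {M : Type*} [Monoid M] [Finite M] (a : M) :
    ∃ m, 1 ≤ m ∧ a ^ (m + m) = a ^ m := by
  obtain ⟨i, j, hne, hij⟩ := Finite.exists_ne_map_eq_of_infinite (fun k : ℕ => a ^ k)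
  -- WLOG i < j
  have main : ∀ i j : ℕ, i < j → a ^ i = a ^ j → ∃ m, 1 ≤ m ∧ a ^ (m + m) = a ^ m := by
    clear hne hij i j
    intro i j hlt hij
    set d := j - i with hd
    have hd1 : 1 ≤ d := by omega
    have hstep : ∀ c : ℕ, a ^ (i + c + d) = a ^ (i + c) := by
      intro c
      have h1 : i + c + d = (i + d) + c := by omega
      have h2 : i + d = j := by omega
      rw [h1, h2, pow_add, ← hij, ← pow_add]
    have hiter : ∀ c k : ℕ, i ≤ k → a ^ (k + c * d) = a ^ k := by
      intro c
      induction c with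
      | zero => intro k _; simp
      | succ c ih =>
        intro k hk
        have h1 : k + (c + 1) * d = (i + (k - i + c * d)) + d := by
          have : (c+1) * d = c * d + d := by ring
          omega
        rw [h1, hstep (k - i + c * d)]
        have h2 : i + (k - i + c * d) = k + c * d := by omega
        rw [h2, ih k hk]
    refine ⟨(i + 1) * d, Nat.mul_pos (by omega) (by omega), ?_⟩
    have := hiter (i + 1) ((i + 1) * d) (by nlinarith)
    rw [← this]
  rcases lt_or_gt_of_ne hne with h | h
  · exact main i j h hij
  · exact main j i h hij.symm

set_option maxHeartbeats 1000000 in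
/-- Lemma 3, second part: if `∑ x(i) = 0` and `gcd(F(y), 1+y+⋯+y^{n-1}) = 1`,
then `x` is a most complicated point for `A = B·Δ` (with `B` the circulant of `b`) iff
`gcd(B(y), 1+y+⋯+y^{n-1}) ≠ 1`. -/
theorem stmt8 (q n : ℕ) (hq : IsPrimePow q) [NeZero n] (hnq : Nat.gcd n q = 1)
    (F : Type) [Field F] [Fintype F] (hF : Fintype.card F = q)
    (x : ZMod n → F)
    (hsum : ∑ i : ZMod n, x i = 0)
    (hx : IsCoprime (∑ i : ZMod n, C (x i) * X ^ i.val)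
        (∑ i ∈ Finset.range n, (X : Polynomial F) ^ i))
    (b : ZMod n → F)
    (A : Matrix (ZMod n) (ZMod n) F)
    (hA : A = Matrix.circulant b *
        (Matrix.circulant (fun i : ZMod n => if i = -1 then (1 : F) else 0) - 1)) :
    MostComplicated (fun y : ZMod n → F => A.mulVec y) x ↔
      ¬ IsCoprime (∑ i : ZMod n, C (b i) * X ^ i.val)
          (∑ i ∈ Finset.range n, (X : Polynomial F) ^ i) := by
  classical
  have hn1 : 1 ≤ n := Nat.one_le_iff_ne_zero.2 (NeZero.ne n)
  -- notation
  set g : Polynomial F := ∑ i ∈ Finset.range n, (X : Polynomial F) ^ i with hgdef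
  set Bp : Polynomial F := ∑ i : ZMod n, C (b i) * X ^ i.val with hBpdef
  set Fp : Polynomial F := ∑ i : ZMod n, C (x i) * X ^ i.val with hFpdef
  set P : Polynomial F := Bp * (X ^ (n-1) - 1) with hPdef
  have hgeom : g * (X - 1) = X ^ n - 1 := geom_sum_mul X n
  have hXpow : (X : Polynomial F) ^ (n-1) * X = X ^ n := by
    rw [← pow_succ]; congr 1; omega
  have hXdvd : (X - 1 : Polynomial F) ∣ X ^ (n-1) - 1 :=
    dvd_iff_isRoot.2 (by simp [IsRoot])
  -- the circulant shift matrix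
  set σ : Matrix (ZMod n) (ZMod n) F := Matrix.circulant (Pi.single (1 : ZMod n) 1) with hσdef
  have sigma_pow : ∀ k : ℕ, σ ^ k = Matrix.circulant (Pi.single ((k : ZMod n)) (1 : F)) := by
    intro k
    induction k with
    | zero => simp [hσdef]
    | succ k ih =>
      have hv : (Matrix.circulant (Pi.single ((k : ZMod n)) (1 : F))).mulVec
          (Pi.single (1 : ZMod n) 1) = Pi.single ((k : ZMod n) + 1) 1 := by
        rw [Matrix.mulVec_single]
        funext i
        simp only [Matrix.circulant_apply, mul_one, Pi.single_apply]
        simp [Pi.single_apply, sub_eq_iff_eq_add]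
      rw [pow_succ, ih, hσdef, Matrix.circulant_mul, hv, Nat.cast_add, Nat.cast_one]
  have circulant_sum' : ∀ (f : ZMod n → (ZMod n → F)),
      ∑ i : ZMod n, Matrix.circulant (f i) = Matrix.circulant (∑ i, f i) := by
    intro f
    ext r c
    simp [Matrix.circulant_apply, Matrix.sum_apply]
  have aeval_sigma : ∀ v : ZMod n → F,
      aeval σ (∑ i : ZMod n, C (v i) * X ^ i.val) = Matrix.circulant v := by
    intro v
    rw [map_sum]
    have h1 : ∀ i : ZMod n,
        aeval σ (C (v i) * X ^ i.val) = Matrix.circulant (Pi.single i (v i)) := by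
      intro i
      rw [_root_.map_mul, map_pow, aeval_X, aeval_C, sigma_pow i.val,
        ZMod.natCast_rightInverse i, ← Algebra.smul_def, ← Matrix.circulant_smul,
        Matrix.circulant_inj]
      funext j
      by_cases h : j = i <;> simp [Pi.single_apply, h]
    rw [Finset.sum_congr rfl (fun i _ => h1 i), circulant_sum', Finset.univ_sum_single]
  have hσroot : aeval σ ((X : Polynomial F) ^ n - 1) = 0 := by
    rw [map_sub, map_pow, aeval_X, _root_.map_one, sigma_pow n, ZMod.natCast_self]
    simp
  -- the ring R and the bijection Φ
  set R := AdjoinRoot ((X : Polynomial F) ^ n - 1) with hRdef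
  have hker : ∀ p ∈ Ideal.span {(X : Polynomial F) ^ n - 1},
      aeval σ p = (0 : Matrix (ZMod n) (ZMod n) F) := by
    intro p hp
    obtain ⟨c, rfl⟩ := Ideal.mem_span_singleton.mp hp
    rw [_root_.map_mul, hσroot, zero_mul]
  set φ : R →+* Matrix (ZMod n) (ZMod n) F :=
    Ideal.Quotient.lift _ ((aeval σ : Polynomial F →ₐ[F] _) : Polynomial F →+* _) hker with hφdef
  have hφmk : ∀ p : Polynomial F, φ (AdjoinRoot.mk _ p) = aeval σ p := by
    intro p
    rfl
  set Φ : R → (ZMod n → F) := fun r => (φ r).mulVec (Pi.single 0 1) with hΦdef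
  have hΦmk : ∀ v : ZMod n → F,
      Φ (AdjoinRoot.mk _ (∑ i : ZMod n, C (v i) * X ^ i.val)) = v := by
    intro v
    rw [hΦdef]
    simp only
    rw [hφmk, aeval_sigma, Matrix.mulVec_single]
    funext i
    simp [Matrix.circulant_apply]
  -- finiteness and cardinality of R
  have hmonic : ((X : Polynomial F) ^ n - 1).Monic := by
    have := monic_X_pow_sub_C (1 : F) (NeZero.ne n)
    simpa using this
  have hne0 : ((X : Polynomial F) ^ n - 1) ≠ 0 := hmonic.ne_zero
  set pb : PowerBasis F R := AdjoinRoot.powerBasis hne0 with hpbdef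
  letI : Fintype R := Module.fintypeOfFintype pb.basis
  have hdim : pb.dim = n := by
    rw [hpbdef]
    show ((X : Polynomial F) ^ n - 1).natDegree = n
    have : ((X : Polynomial F) ^ n - C 1).natDegree = n := natDegree_X_pow_sub_C
    simpa using this
  have hcardR : Fintype.card R = Fintype.card F ^ n := by
    rw [Module.card_fintype pb.basis, Fintype.card_fin, hdim]
  have hbij : Function.Bijective Φ := by
    rw [Fintype.bijective_iff_surjective_and_card]
    constructor
    · intro v
      exact ⟨AdjoinRoot.mk _ (∑ i : ZMod n, C (v i) * X ^ i.val), hΦmk v⟩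
    · rw [hcardR, Fintype.card_fun, ZMod.card]
  -- the element a and equivariance
  set a : R := AdjoinRoot.mk _ P with hadef
  have hφa : φ a = A := by
    rw [hadef, hφmk, hPdef, _root_.map_mul, map_sub, map_pow, aeval_X,
      _root_.map_one, aeval_sigma, sigma_pow (n-1), hA]
    have hcast : ((n-1 : ℕ) : ZMod n) = -1 := by
      rw [Nat.cast_sub hn1, Nat.cast_one, ZMod.natCast_self]
      ring
    rw [hcast]
    have hfn : (fun i : ZMod n => if i = -1 then (1 : F) else 0) = Pi.single (-1) 1 := by
      funext i
      rw [Pi.single_apply]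
    rw [hfn]
  have hsemi : ∀ r : R, Φ (a * r) = A.mulVec (Φ r) := by
    intro r
    rw [hΦdef]
    simp only
    rw [_root_.map_mul, hφa, ← Matrix.mulVec_mulVec]
  set rx : R := AdjoinRoot.mk _ Fp with hrxdef
  have hΦx : Φ rx = x := hΦmk x
  have step1 : MostComplicated (fun y : ZMod n → F => A.mulVec y) x
      ↔ MostComplicated (fun z : R => a * z) rx := by
    rw [← hΦx]
    exact mostComplicated_conj Φ _ _ hbij hsemi rx
  -- reducedness of R
  have hcharn : (n : F) ≠ 0 := by
    intro h
    have hc : ringChar F ∣ n := (ringChar.spec F n).mp h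
    have hq0 : ((Fintype.card F : F)) = 0 := FiniteField.cast_card_eq_zero F
    have hcq : ringChar F ∣ q := by rw [← hF]; exact (ringChar.spec F _).mp hq0
    have h1 : ringChar F ∣ 1 := hnq ▸ Nat.dvd_gcd hc hcq
    exact CharP.char_ne_one F (ringChar F) (Nat.dvd_one.mp h1)
  have hsf : Squarefree ((X : Polynomial F) ^ n - 1) := by
    have hsep := Polynomial.separable_X_pow_sub_C (1 : F) hcharn one_ne_zero
    have : Separable ((X : Polynomial F) ^ n - 1) := by simpa using hsep
    exact this.squarefree
  have hred : IsReduced R := by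
    have h1 : (Ideal.span {(X : Polynomial F) ^ n - 1}).IsRadical :=
      isRadical_iff_span_singleton.mp hsf.isRadical
    exact (Ideal.isRadical_iff_quotient_reduced _).mp h1
  -- the idempotent-unit decomposition of a
  obtain ⟨m, hm1, hm⟩ := exists_pow_idem a
  set e : R := a ^ m with hedef
  have he : e * e = e := by rw [hedef, ← pow_add, hm]
  have hae : a * e = a := by
    have h1e : (1 - e) * (1 - e) = 1 - e := by linear_combination he
    have h1epow : ∀ s : ℕ, 1 ≤ s → (1 - e) ^ s = 1 - e := by
      intro s hs
      induction s with
      | zero => omega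
      | succ s ih =>
        rcases Nat.eq_or_lt_of_le hs with h | h
        · simp [← h]
        · rw [pow_succ, ih (by omega), h1e]
    have hnil : (a * (1 - e)) ^ m = 0 := by
      rw [mul_pow, h1epow m hm1, ← hedef]
      linear_combination -he
    have hz : a * (1 - e) = 0 := IsReduced.eq_zero _ ⟨m, hnil⟩
    linear_combination -hz
  have heak : ∀ k : ℕ, 1 ≤ k → a ^ k * e = a ^ k := by
    intro k hk
    obtain ⟨k', rfl⟩ : ∃ k', k = k' + 1 := ⟨k - 1, by omega⟩
    rw [pow_succ, mul_assoc, hae]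
  have hkey : a ^ (2*m-1) * a = e := by
    have h1 : (2*m-1) + 1 = m + m := by omega
    rw [← pow_succ, h1, hm, hedef]
  have huinv : (a + 1 - e) * (a ^ (2*m-1) + 1 - e) = 1 := by
    have h2 := heak (2*m-1) (by omega)
    linear_combination hkey - hae - h2 + he
  let u : Rˣ := Units.mkOfMulEqOne _ _ huinv
  have huval : (u : R) = a + 1 - e := rfl
  have heu : e * (u : R) = a := by
    rw [huval]
    linear_combination hae - he
  have hne : e ≠ 1 := by
    intro h1
    have hu1 : a ^ (m-1) * a = 1 := by
      have hmm : (m-1) + 1 = m := by omega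
      rw [← pow_succ, hmm, ← hedef, h1]
    have hmk : a ^ (m-1) = AdjoinRoot.mk _ (P ^ (m-1)) := by rw [hadef, map_pow]
    have hmk2 : AdjoinRoot.mk ((X : Polynomial F)^n - 1) (P ^ (m-1) * P) = AdjoinRoot.mk _ 1 := by
      rw [_root_.map_mul, ← hmk, ← hadef, hu1, _root_.map_one]
    have hdvd : ((X : Polynomial F)^n - 1) ∣ (P ^ (m-1) * P - 1) := AdjoinRoot.mk_eq_mk.mp hmk2
    have hdvd1 : (X - 1 : Polynomial F) ∣ (P ^ (m-1) * P - 1) :=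
      dvd_trans (dvd_iff_isRoot.2 (by simp [IsRoot])) hdvd
    have hroot := dvd_iff_isRoot.mp hdvd1
    have hev : eval 1 P = 0 := by rw [hPdef]; simp
    rw [IsRoot, eval_sub, eval_mul, hev, eval_one, mul_zero, zero_sub] at hroot
    exact one_ne_zero (neg_eq_zero.mp hroot)
  -- the "partial inverse" hypothesis for x
  have hPm : P ^ m = P ^ (m-1) * P := by rw [← pow_succ]; congr 1; omega
  obtain ⟨D, hD⟩ : (X - 1 : Polynomial F) ∣ P := by
    rw [hPdef]; exact hXdvd.mul_left Bp
  obtain ⟨p, s, hps⟩ := hx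
  have hemk : e = AdjoinRoot.mk _ (P ^ m) := by rw [hedef, hadef, map_pow]
  have hw : (AdjoinRoot.mk ((X : Polynomial F)^n - 1) p) * (e * rx) = e := by
    rw [hemk, hrxdef, ← _root_.map_mul, ← _root_.map_mul]
    apply AdjoinRoot.mk_eq_mk.mpr
    refine ⟨-(P^(m-1) * D * s), ?_⟩
    calc p * (P^m * Fp) - P^m = P^m * (p * Fp - 1) := by ring
    _ = P^m * (-(s*g)) := by rw [show p*Fp - 1 = -(s*g) from by linear_combination hps]
    _ = (P^(m-1) * ((X-1)*D)) * (-(s*g)) := by rw [← hD, ← hPm]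
    _ = ((X : Polynomial F)^n - 1) * -(P^(m-1)*D*s) := by rw [← hgeom]; ring
  have step2 : MostComplicated (fun z : R => a * z) rx ↔ ¬ ∃ z : R, a * z = rx := by
    have habs := mc_abstract e u he hne rx (AdjoinRoot.mk _ p) hw
    simp only [heu] at habs
    exact habs
  -- translation to the coprimality condition
  have hFp1 : Polynomial.eval 1 Fp = 0 := by
    rw [hFpdef, eval_finset_sum]
    simpa using hsum
  obtain ⟨F1, hF1⟩ : (X - 1 : Polynomial F) ∣ Fp := dvd_iff_isRoot.2 hFp1
  have hgx : g * (X - 1) = X^(n-1) * X - 1 := by rw [hgeom, ← hXpow]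
  have hfin : (∃ z : R, a * z = rx) ↔ IsCoprime Bp g := by
    constructor
    · rintro ⟨z, hz⟩
      obtain ⟨Zp, rfl⟩ := AdjoinRoot.mk_surjective z
      rw [hadef, hrxdef, ← _root_.map_mul] at hz
      obtain ⟨k, hk⟩ := AdjoinRoot.mk_eq_mk.mp hz
      rw [hPdef] at hk
      have hcop : IsCoprime (Bp * ((X^(n-1) - 1) * Zp)) g := by
        refine ⟨p, s - p * (X-1) * k, ?_⟩
        linear_combination p * hk + hps - p * k * hgeom
      exact hcop.of_mul_left_left
    · rintro ⟨p', s', hps'⟩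
      refine ⟨AdjoinRoot.mk _ (-(X * p' * F1)), ?_⟩
      rw [hadef, hrxdef, ← _root_.map_mul]
      apply AdjoinRoot.mk_eq_mk.mpr
      refine ⟨-(p' * Bp * F1) - s' * F1, ?_⟩
      rw [hF1, ← hXpow, hPdef]
      linear_combination (X-1) * F1 * hps' - s' * F1 * hgx
  rw [step1, step2, hfin]
end

section
/- Let q = p^d be a prime power, let n be an odd prime with n ≠ p, and let f : ZMod n → F_q be a nontrivial multiplicative function. Then in F_q[y], gcd( ∑_{a ∈ ZMod n} f(a) y^{val(a)} , ∑_{i=0}^{n−1} y^i ) = 1; equivalently, the polynomial ∑_{i=1}^{n−1} f(i) y^i is invertible in F_q[y] modulo 1 + y + ⋯ + y^{n−1}. -/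
open Polynomial Finset

/-- A multiplicative function `ZMod n → F`: vanishes at `0`, is not identically zero on
nonzero elements, and is multiplicative on nonzero elements. -/
def IsMultFun {n : ℕ} {F : Type*} [Field F] (f : ZMod n → F) : Prop :=
  f 0 = 0 ∧ (∃ a : ZMod n, a ≠ 0 ∧ f a ≠ 0) ∧
    ∀ a b : ZMod n, a ≠ 0 → b ≠ 0 → f (a * b) = f a * f b

lemma gauss_aux {n : ℕ} [Fact n.Prime] {K : Type*} [Field K] (f : ZMod n → K)
    (hf0 : f 0 = 0) (hf1 : f 1 = 1)
    (hmul : ∀ a b : ZMod n, a ≠ 0 → b ≠ 0 → f (a * b) = f a * f b)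
    (hne : ∀ b : ZMod n, b ≠ 0 → f b ≠ 0) (hS : ∑ c : ZMod n, f c = 0)
    (x : K) (hxn : x ^ n = 1) (hx1 : x ≠ 1) (hn : (n : K) ≠ 0) :
    ∑ a : ZMod n, f a * x ^ a.val ≠ 0 := by
  intro hG
  have hmod : ∀ m : ℕ, x ^ (m % n) = x ^ m := by
    intro m
    conv_rhs => rw [← Nat.div_add_mod m n]
    rw [pow_add, pow_mul, hxn, one_pow, one_mul]
  have he : ∀ a b : ZMod n, x ^ (a + b).val = x ^ a.val * x ^ b.val := by
    intro a b
    rw [ZMod.val_add, hmod, pow_add]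
  have hesum : ∑ b : ZMod n, x ^ b.val = 0 := by
    have h1 : ∑ b : ZMod n, x ^ b.val = ∑ i ∈ range n, x ^ i := by
      apply Finset.sum_nbij' (fun b => b.val) (fun i => ((i : ℕ) : ZMod n)) <;>
        try simp [ZMod.val_cast_of_lt, ZMod.val_lt, ZMod.natCast_val, Finset.mem_range]
      intro a ha
      exact Nat.mod_eq_of_lt ha
    have h2 := geom_sum_mul x n
    rw [hxn, sub_self] at h2
    rcases mul_eq_zero.mp h2 with h | h
    · rw [h1, h]
    · exact absurd (sub_eq_zero.mp h) hx1
  set G := ∑ a : ZMod n, f a * x ^ a.val with hGdef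
  set H := ∑ b : ZMod n, (f b)⁻¹ * x ^ (-b).val with hHdef
  have key : G * H = (n : K) := by
    have expand : G * H = ∑ b : ZMod n, ∑ a : ZMod n,
        f a * x ^ a.val * ((f b)⁻¹ * x ^ (-b).val) := by
      rw [hGdef, hHdef, Finset.mul_sum]
      exact Finset.sum_congr rfl fun b _ => (Finset.sum_mul _ _ _)
    have inner1 : ∀ b : ZMod n, (∑ a : ZMod n, f a * x ^ a.val * ((f b)⁻¹ * x ^ (-b).val))
        = ∑ c : ZMod n, f c * x ^ (b * (c - 1)).val := by
      intro b
      by_cases hb : b = 0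
      · subst hb
        simp only [hf0, inv_zero, zero_mul, mul_zero, Finset.sum_const_zero,
          ZMod.val_zero, pow_zero, mul_one]
        exact hS.symm
      · refine (Fintype.sum_bijective (fun c => b * c)
          (Equiv.mulLeft₀ b hb).bijective _ _ fun c => ?_).symm
        by_cases hc : c = 0
        · subst hc; simp [hf0]
        · have e1 : x ^ (b * (c - 1)).val = x ^ (b * c).val * x ^ (-b).val := by
            rw [← he]; ring_nf
          rw [hmul b c hb hc, e1]
          field_simp [hne b hb]
    rw [expand]
    have swap : (∑ b : ZMod n, ∑ c : ZMod n, f c * x ^ (b * (c - 1)).val)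
        = ∑ c : ZMod n, f c * ∑ b : ZMod n, x ^ (b * (c - 1)).val := by
      rw [Finset.sum_comm]
      exact Finset.sum_congr rfl fun c _ => (Finset.mul_sum _ _ _).symm
    rw [Finset.sum_congr rfl fun b _ => inner1 b, swap]
    have inner2 : ∀ c : ZMod n, (∑ b : ZMod n, x ^ (b * (c - 1)).val)
        = if c = 1 then (n : K) else 0 := by
      intro c
      by_cases hc : c = 1
      · subst hc
        simp only [sub_self, mul_zero, ZMod.val_zero, pow_zero, Finset.sum_const,
          Finset.card_univ, ZMod.card, nsmul_eq_mul, mul_one, if_pos rfl]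
        simp
      · rw [if_neg hc]
        have hc1 : c - 1 ≠ 0 := sub_ne_zero.mpr hc
        have := Fintype.sum_bijective (fun b : ZMod n => b * (c - 1))
          (Equiv.mulRight₀ (c - 1) hc1).bijective
          (fun b : ZMod n => x ^ (b * (c - 1)).val) (fun b : ZMod n => x ^ b.val)
          (fun b => rfl)
        rw [this, hesum]
    rw [Finset.sum_congr rfl fun c _ => by rw [inner2 c]]
    simp [Finset.sum_ite_eq', hf1]
  rw [hG, zero_mul] at key
  exact hn key.symm

/-- key step of Theorem 2: for a nontrivial multiplicative function `f`
on `ZMod n` (`n` an odd prime, `n ≠ p = char F_q`), the polynomial `∑ f(a) y^{val a}`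
is coprime to `1 + y + ⋯ + y^{n-1}` in `F_q[y]`. -/
theorem stmt9 (p d q n : ℕ) (hp : p.Prime) (hq : q = p ^ d)
    [Fact n.Prime] (hodd : Odd n) (hnp : n ≠ p)
    (F : Type) [Field F] [Fintype F] [CharP F p] (hF : Fintype.card F = q)
    (f : ZMod n → F) (hf : IsMultFun f)
    (hnt : ∃ a : ZMod n, a ≠ 0 ∧ f a ≠ 1) :
    IsCoprime (∑ a : ZMod n, C (f a) * X ^ a.val)
      (∑ i ∈ Finset.range n, (X : Polynomial F) ^ i) := by
  obtain ⟨hf0, ⟨a0, ha0, hfa0⟩, hmul⟩ := hf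
  have hnprime : n.Prime := Fact.out
  -- f is nonzero on nonzero elements
  have hne : ∀ b : ZMod n, b ≠ 0 → f b ≠ 0 := by
    intro b hb h
    apply hfa0
    have hb' : b⁻¹ * a0 ≠ 0 := mul_ne_zero (inv_ne_zero hb) ha0
    have : a0 = b * (b⁻¹ * a0) := by
      rw [← mul_assoc, mul_inv_cancel₀ hb, one_mul]
    rw [this, hmul b _ hb hb', h, zero_mul]
  -- f 1 = 1
  have hf1 : f 1 = 1 := by
    have h := hmul 1 1 one_ne_zero one_ne_zero
    rw [mul_one] at h
    have := hne 1 one_ne_zero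
    field_simp at h
    tauto
  -- sum of f over all elements is 0
  have hS : ∑ c : ZMod n, f c = 0 := by
    obtain ⟨a, ha, hfa⟩ := hnt
    have hbij : ∑ c : ZMod n, f (a * c) = ∑ c : ZMod n, f c :=
      Fintype.sum_bijective (fun c => a * c) (Equiv.mulLeft₀ a ha).bijective _ _ fun c => rfl
    have heach : ∀ c : ZMod n, f (a * c) = f a * f c := by
      intro c
      by_cases hc : c = 0
      · subst hc; rw [mul_zero, hf0, mul_zero]
      · exact hmul a c ha hc
    rw [Finset.sum_congr rfl fun c _ => heach c, ← Finset.mul_sum] at hbij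
    have : (f a - 1) * ∑ c : ZMod n, f c = 0 := by rw [sub_mul, one_mul, hbij, sub_self]
    rcases mul_eq_zero.mp this with h | h
    · exact absurd (by linear_combination h : f a = 1) hfa
    · exact h
  -- cast n is nonzero in F and its algebraic closure
  set K := AlgebraicClosure F
  have hpn : ¬ (p ∣ n) := by
    intro h
    exact hnp ((Nat.prime_dvd_prime_iff_eq hp hnprime).mp h).symm
  have hnK : (n : K) ≠ 0 := by
    have : CharP K p := inferInstance
    exact fun h0 => hpn ((CharP.cast_eq_zero_iff K p n).mp h0)
  rw [Polynomial.isCoprime_iff_aeval_ne_zero_of_isAlgClosed F K]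
  intro x
  by_contra hcon
  push_neg at hcon
  obtain ⟨hA, hB⟩ := hcon
  -- from hB : x is a nontrivial n-th root of unity
  have hB' : ∑ i ∈ range n, x ^ i = 0 := by
    simpa using hB
  have hxn : x ^ n = 1 := by
    have h2 := geom_sum_mul x n
    rw [hB', zero_mul] at h2
    linear_combination -h2
  have hx1 : x ≠ 1 := by
    intro h
    subst h
    simp only [one_pow, Finset.sum_const, Finset.card_range, nsmul_eq_mul, mul_one] at hB'
    exact hnK hB'
  -- apply the Gauss sum lemma to algebraMap F K ∘ f
  set φ := algebraMap F K with hφ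
  have hA' : ∑ a : ZMod n, φ (f a) * x ^ a.val = 0 := by
    simpa using hA
  have hφinj : Function.Injective φ := (algebraMap F K).injective
  refine gauss_aux (fun a => φ (f a)) (by show φ (f 0) = 0; rw [hf0, map_zero])
    (by show φ (f 1) = 1; rw [hf1, map_one])
    (fun a b ha hb => by show φ (f (a * b)) = φ (f a) * φ (f b); rw [hmul a b ha hb, map_mul])
    (fun b hb h0 => hne b hb (hφinj (by simpa using h0)))
    (by rw [← map_sum, hS, map_zero]) x hxn hx1 hnK hA'
end

section
/- Let q = p^d be a prime power, let n be an odd prime with n ≠ p, and let f : ZMod n → F_q be a nontrivial multiplicative function, viewed as a vector in F_q^n. Then f is a most complicated or almost most complicated point for every linear operator A on F_q^n representable in the form A = B·Δ with B a translation-invariant linear operator. -/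
open Function Polynomial Finset

section Stmt10Aux

/-- Eventual periodicity on a finite set. -/
lemma stmt10_exists_iterate_eq {S : Type*} [Finite S] (T : S → S) (x : S) :
    ∃ s t, 1 ≤ t ∧ T^[s + t] x = T^[s] x := by
  obtain ⟨a, b, hab, h⟩ := Finite.exists_ne_map_eq_of_infinite (fun m : ℕ => T^[m] x)
  rcases lt_or_gt_of_ne hab with h' | h'
  · refine ⟨a, b - a, by omega, ?_⟩
    have : a + (b - a) = b := by omega
    rw [this]; exact h.symm
  · refine ⟨b, a - b, by omega, ?_⟩
    have : b + (a - b) = a := by omega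
    rw [this]; exact h

variable {n : ℕ} [NeZero n] {F : Type} [Field F] {E : Type} [Field E] [Algebra F E]

/-- Fourier-type transform of a vector `x : ZMod n → F` w.r.t. an additive character `ψ`. -/
noncomputable def phiT (ψ : AddChar (ZMod n) E) (x : ZMod n → F) (j : ZMod n) : E :=
  ∑ a, algebraMap F E (x a) * ψ (j * a)

/-- Indicator vector. -/
def eV (F : Type) [Field F] {n : ℕ} (m : ZMod n) : ZMod n → F :=
  fun i => if m = i then (1 : F) else 0

variable (ψ : AddChar (ZMod n) E)

lemma shiftOp_apply (x : ZMod n → F) (i : ZMod n) : shiftOp F n x i = x (i + 1) := rfl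

lemma phiT_sub (x y : ZMod n → F) (j : ZMod n) :
    phiT ψ (x - y) j = phiT ψ x j - phiT ψ y j := by
  unfold phiT
  rw [← Finset.sum_sub_distrib]
  refine Finset.sum_congr rfl fun a _ => ?_
  rw [Pi.sub_apply, map_sub, sub_mul]

lemma phiT_smul (c : F) (x : ZMod n → F) (j : ZMod n) :
    phiT ψ (c • x) j = algebraMap F E c * phiT ψ x j := by
  unfold phiT
  rw [Finset.mul_sum]
  refine Finset.sum_congr rfl fun a _ => ?_
  rw [Pi.smul_apply, smul_eq_mul, map_mul, mul_assoc]

lemma phiT_sum {ι : Type*} (s : Finset ι) (g : ι → (ZMod n → F)) (j : ZMod n) :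
    phiT ψ (∑ m ∈ s, g m) j = ∑ m ∈ s, phiT ψ (g m) j := by
  unfold phiT
  rw [Finset.sum_comm]
  refine Finset.sum_congr rfl fun a _ => ?_
  rw [Finset.sum_apply, map_sum, Finset.sum_mul]

lemma phiT_shift (x : ZMod n → F) (j : ZMod n) :
    phiT ψ (shiftOp F n x) j = ψ (-j) * phiT ψ x j := by
  unfold phiT
  rw [Finset.mul_sum]
  refine Fintype.sum_equiv (Equiv.addRight (1 : ZMod n)) _ _ fun a => ?_
  rw [Equiv.coe_addRight, shiftOp_apply, mul_left_comm, ← AddChar.map_add_eq_mul,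
    show -j + j * (a + 1) = j * a by ring]

lemma phiT_shift_pow (k : ℕ) (x : ZMod n → F) (j : ZMod n) :
    phiT ψ ((shiftOp F n ^ k) x) j = ψ (-j) ^ k * phiT ψ x j := by
  induction k with
  | zero => simp
  | succ k ih =>
    rw [pow_succ', Module.End.mul_apply, phiT_shift, ih, pow_succ']
    ring

lemma shiftOp_pow_apply (k : ℕ) (x : ZMod n → F) (i : ZMod n) :
    ((shiftOp F n ^ k) x) i = x (i + (k : ZMod n)) := by
  induction k generalizing i with
  | zero => simp
  | succ k ih =>
    rw [pow_succ', Module.End.mul_apply, shiftOp_apply, ih]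
    congr 1
    push_cast
    ring

lemma eV_eq_shift (m : ZMod n) :
    eV F m = (shiftOp F n ^ (-m).val) (eV F 0) := by
  funext i
  rw [shiftOp_pow_apply]
  unfold eV
  rw [ZMod.natCast_zmod_val]
  by_cases h : m = i
  · subst h
    rw [if_pos rfl, if_pos (by ring)]
  · rw [if_neg h, if_neg (fun hc => h (by linear_combination hc))]

lemma phiT_eV (m : ZMod n) (j : ZMod n) : phiT ψ (eV F m) j = ψ (j * m) := by
  unfold phiT eV
  rw [Finset.sum_eq_single m]
  · simp
  · intro b _ hb
    simp [Ne.symm hb]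
  · simp

lemma sum_psi (hψ : ψ.IsPrimitive) (c : ZMod n) :
    ∑ j : ZMod n, ψ (j * c) = if c = 0 then (n : E) else 0 := by
  split
  · next h =>
    subst h
    simp [ZMod.card]
  · next h =>
    have h2 := AddChar.sum_eq_zero_of_ne_one (hψ h)
    rw [← h2]
    refine Finset.sum_congr rfl fun a _ => ?_
    rw [AddChar.mulShift_apply, mul_comm]

lemma phiT_inj (hψ : ψ.IsPrimitive) (hn : (n : E) ≠ 0) {x y : ZMod n → F}
    (h : ∀ j, phiT ψ x j = phiT ψ y j) : x = y := by
  have key : ∀ (z : ZMod n → F) (b : ZMod n),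
      ∑ j : ZMod n, phiT ψ z j * ψ (-(j * b)) = (n : E) * algebraMap F E (z b) := by
    intro z b
    unfold phiT
    calc ∑ j : ZMod n, (∑ a, algebraMap F E (z a) * ψ (j * a)) * ψ (-(j * b))
        = ∑ j : ZMod n, ∑ a, algebraMap F E (z a) * ψ (j * (a - b)) := by
          refine Finset.sum_congr rfl fun j _ => ?_
          rw [Finset.sum_mul]
          refine Finset.sum_congr rfl fun a _ => ?_
          rw [mul_assoc, ← AddChar.map_add_eq_mul, show j * a + -(j * b) = j * (a - b) by ring]
      _ = ∑ a, algebraMap F E (z a) * ∑ j : ZMod n, ψ (j * (a - b)) := by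
          rw [Finset.sum_comm]
          refine Finset.sum_congr rfl fun a _ => ?_
          rw [Finset.mul_sum]
      _ = ∑ a, algebraMap F E (z a) * (if a - b = 0 then (n : E) else 0) := by
          refine Finset.sum_congr rfl fun a _ => ?_
          rw [sum_psi ψ hψ]
      _ = (n : E) * algebraMap F E (z b) := by
          rw [Finset.sum_eq_single b]
          · simp [mul_comm]
          · intro a _ ha
            rw [if_neg (by simpa [sub_eq_zero] using ha), mul_zero]
          · simp
  funext b
  have h1 := key x b
  have h2 := key y b
  have h3 : (n : E) * algebraMap F E (x b) = (n : E) * algebraMap F E (y b) := by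
    rw [← h1, ← h2]
    exact Finset.sum_congr rfl fun j _ => by rw [h j]
  have h4 := mul_left_cancel₀ hn h3
  exact (algebraMap F E).injective h4

lemma B_pow_comm (B : (ZMod n → F) →ₗ[F] (ZMod n → F))
    (hB : B ∘ₗ shiftOp F n = shiftOp F n ∘ₗ B) (k : ℕ) (x : ZMod n → F) :
    B ((shiftOp F n ^ k) x) = (shiftOp F n ^ k) (B x) := by
  have hc : Commute B (shiftOp F n) := hB
  have := (hc.pow_right k)
  calc B ((shiftOp F n ^ k) x) = (B * shiftOp F n ^ k) x := rfl
    _ = (shiftOp F n ^ k * B) x := by rw [this]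
    _ = (shiftOp F n ^ k) (B x) := rfl

lemma phiT_B (B : (ZMod n → F) →ₗ[F] (ZMod n → F))
    (hB : B ∘ₗ shiftOp F n = shiftOp F n ∘ₗ B) (x : ZMod n → F) (j : ZMod n) :
    phiT ψ (B x) j = phiT ψ (B (eV F 0)) j * phiT ψ x j := by
  have hBe : ∀ m : ZMod n, phiT ψ (B (eV F m)) j = ψ (j * m) * phiT ψ (B (eV F 0)) j := by
    intro m
    rw [eV_eq_shift, B_pow_comm B hB, phiT_shift_pow]
    congr 1
    rw [← AddChar.map_nsmul_eq_pow, nsmul_eq_mul, ZMod.natCast_zmod_val]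
    congr 1
    ring
  conv_lhs => rw [pi_eq_sum_univ x, map_sum]
  rw [phiT_sum]
  have : ∀ m : ZMod n, phiT ψ (B (x m • fun j => if m = j then (1:F) else 0)) j
      = algebraMap F E (x m) * ψ (j * m) * phiT ψ (B (eV F 0)) j := by
    intro m
    rw [map_smul, phiT_smul]
    have h2 : (fun j => if m = j then (1:F) else 0) = eV F m := rfl
    rw [h2, hBe m, mul_assoc]
  rw [Finset.sum_congr rfl fun m _ => this m]
  have h3 : ∑ m : ZMod n, algebraMap F E (x m) * ψ (j * m) * phiT ψ (B (eV F 0)) j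
      = (∑ m : ZMod n, algebraMap F E (x m) * ψ (j * m)) * phiT ψ (B (eV F 0)) j := by
    rw [Finset.sum_mul]
  rw [h3, mul_comm]
  rfl

lemma phiT_A (B : (ZMod n → F) →ₗ[F] (ZMod n → F))
    (hB : B ∘ₗ shiftOp F n = shiftOp F n ∘ₗ B) (x : ZMod n → F) (j : ZMod n) :
    phiT ψ ((B ∘ₗ (shiftOp F n - LinearMap.id)) x) j
      = (phiT ψ (B (eV F 0)) j * (ψ (-j) - 1)) * phiT ψ x j := by
  have h1 : (B ∘ₗ (shiftOp F n - LinearMap.id)) x = B (shiftOp F n x - x) := by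
    simp [LinearMap.sub_apply]
  rw [h1, phiT_B ψ B hB, phiT_sub, phiT_shift]
  ring

end Stmt10Aux

section Stmt10Key

variable {n : ℕ} [NeZero n] {F : Type} [Field F] [Fintype F] {E : Type} [Field E] [Algebra F E]

/-- The main dynamical lemma. -/
lemma stmt10_key (ψ : AddChar (ZMod n) E) (hψ : ψ.IsPrimitive) (hnE : (n : E) ≠ 0)
    (f : ZMod n → F) (hGauss : ∀ j : ZMod n, j ≠ 0 → phiT ψ f j ≠ 0)
    (B : (ZMod n → F) →ₗ[F] (ZMod n → F)) (hB : B ∘ₗ shiftOp F n = shiftOp F n ∘ₗ B) :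
    MostComplicated (fun y : ZMod n → F => (B ∘ₗ (shiftOp F n - LinearMap.id)) y) f ∨
    AlmostMostComplicated (fun y : ZMod n → F => (B ∘ₗ (shiftOp F n - LinearMap.id)) y) f := by
  set T : (ZMod n → F) → (ZMod n → F) := fun y => (B ∘ₗ (shiftOp F n - LinearMap.id)) y with hT
  set lam : ZMod n → E := fun j => phiT ψ (B (eV F 0)) j * (ψ (-j) - 1) with hlam
  have hlam0 : lam 0 = 0 := by
    rw [hlam]
    simp
  have hiter : ∀ (m : ℕ) (x : ZMod n → F) (j : ZMod n),
      phiT ψ (T^[m] x) j = lam j ^ m * phiT ψ x j := by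
    intro m
    induction m with
    | zero => intro x j; simp
    | succ m ih =>
      intro x j
      rw [Function.iterate_succ_apply', hT]
      rw [phiT_A ψ B hB, ih, pow_succ]
      ring
  have heq : ∀ (x : ZMod n → F) (a b : ℕ), T^[a] x = T^[b] x ↔
      ∀ j, lam j ^ a * phiT ψ x j = lam j ^ b * phiT ψ x j := by
    intro x a b
    constructor
    · intro h j
      rw [← hiter a x j, ← hiter b x j, h]
    · intro h
      refine phiT_inj ψ hψ hnE fun j => ?_
      rw [hiter, hiter]
      exact h j
  -- the element e0 with all Fourier coefficients equal to 1
  have hΦe0 : ∀ j, phiT ψ (eV F 0) j = 1 := by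
    intro j
    rw [phiT_eV]
    simp
  obtain ⟨s₀, t₀, ht₀1, ht₀⟩ := stmt10_exists_iterate_eq T (eV F 0)
  have hlamt₀ : ∀ j, lam j ≠ 0 → lam j ^ t₀ = 1 := by
    intro j hj
    have h1 := (heq (eV F 0) (s₀ + t₀) s₀).mp ht₀ j
    rw [hΦe0, mul_one, mul_one, pow_add] at h1
    have h2 : lam j ^ s₀ * lam j ^ t₀ = lam j ^ s₀ * 1 := by rw [mul_one, h1]
    exact mul_left_cancel₀ (pow_ne_zero s₀ hj) h2
  have hglob : ∀ x : ZMod n → F, T^[1 + t₀] x = T^[1] x := by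
    intro x
    refine (heq x (1 + t₀) 1).mpr fun j => ?_
    rcases eq_or_ne (lam j) 0 with h0 | h0
    · rw [h0, zero_pow (by omega), zero_pow one_ne_zero]
    · rw [pow_add, hlamt₀ j h0, mul_one]
  -- preperiods
  have hpre_le : ∀ x : ZMod n → F, orbitPreperiod T x ≤ 1 := by
    intro x
    exact Nat.sInf_le ⟨t₀, ht₀1, hglob x⟩
  have hpre_e0 : orbitPreperiod T (eV F 0) = 1 := by
    refine le_antisymm (hpre_le _) ?_
    rw [Nat.one_le_iff_ne_zero]
    intro h0
    rcases (Nat.sInf_eq_zero.mp h0) with h | h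
    · obtain ⟨t, ht1, ht⟩ := h
      have := (heq (eV F 0) (0 + t) 0).mp ht 0
      rw [hΦe0, mul_one, mul_one, zero_add, hlam0, zero_pow (by omega), pow_zero] at this
      exact zero_ne_one this
    · have : (1 : ℕ) ∈ {s | ∃ t, 1 ≤ t ∧ T^[s + t] (eV F 0) = T^[s] (eV F 0)} :=
        ⟨t₀, ht₀1, hglob _⟩
      rw [h] at this
      exact this
  have hsup_pre : (Finset.univ.sup fun y : ZMod n → F => orbitPreperiod T y) = 1 := by
    refine le_antisymm (Finset.sup_le fun y _ => hpre_le y) ?_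
    rw [← hpre_e0]
    exact Finset.le_sup (Finset.mem_univ _)
  -- periods
  have hper_set : ∀ x : ZMod n → F,
      {t : ℕ | 1 ≤ t ∧ ∃ s, T^[s + t] x = T^[s] x}
        = {t : ℕ | 1 ≤ t ∧ ∀ j, phiT ψ x j ≠ 0 → lam j ≠ 0 → lam j ^ t = 1} := by
    intro x
    ext t
    simp only [Set.mem_setOf_eq]
    constructor
    · rintro ⟨ht1, s, hs⟩
      refine ⟨ht1, fun j hxj hlj => ?_⟩
      have h1 := (heq x (s + t) s).mp hs j
      have h2 := mul_right_cancel₀ hxj h1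
      rw [pow_add] at h2
      have h3 : lam j ^ s * lam j ^ t = lam j ^ s * 1 := by rw [mul_one, h2]
      exact mul_left_cancel₀ (pow_ne_zero s hlj) h3
    · rintro ⟨ht1, hcond⟩
      refine ⟨ht1, 1, (heq x (1 + t) 1).mpr fun j => ?_⟩
      rcases eq_or_ne (phiT ψ x j) 0 with h0 | h0
      · rw [h0, mul_zero, mul_zero]
      rcases eq_or_ne (lam j) 0 with hl | hl
      · rw [hl, zero_pow (by omega), zero_pow one_ne_zero]
      · rw [pow_add, hcond j h0 hl, mul_one]
  have hper_e0_set : {t : ℕ | 1 ≤ t ∧ ∃ s, T^[s + t] (eV F 0) = T^[s] (eV F 0)}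
      = {t : ℕ | 1 ≤ t ∧ ∀ j, lam j ≠ 0 → lam j ^ t = 1} := by
    rw [hper_set]
    ext t
    simp only [Set.mem_setOf_eq, hΦe0]
    constructor
    · rintro ⟨h1, h2⟩
      exact ⟨h1, fun j => h2 j one_ne_zero⟩
    · rintro ⟨h1, h2⟩
      exact ⟨h1, fun j _ => h2 j⟩
  have hper_f_set : {t : ℕ | 1 ≤ t ∧ ∃ s, T^[s + t] f = T^[s] f}
      = {t : ℕ | 1 ≤ t ∧ ∀ j, lam j ≠ 0 → lam j ^ t = 1} := by
    rw [hper_set]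
    ext t
    simp only [Set.mem_setOf_eq]
    constructor
    · rintro ⟨h1, h2⟩
      refine ⟨h1, fun j hlj => ?_⟩
      rcases eq_or_ne j 0 with rfl | hj
      · exact absurd hlam0 hlj
      · exact h2 j (hGauss j hj) hlj
    · rintro ⟨h1, h2⟩
      exact ⟨h1, fun j _ => h2 j⟩
  have hper_f_e0 : orbitPeriod T f = orbitPeriod T (eV F 0) := by
    rw [orbitPeriod, orbitPeriod, hper_f_set, hper_e0_set]
  have hmem : orbitPeriod T (eV F 0) ∈
      {t : ℕ | 1 ≤ t ∧ ∀ j, lam j ≠ 0 → lam j ^ t = 1} := by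
    rw [orbitPeriod, hper_e0_set]
    exact Nat.sInf_mem ⟨t₀, ht₀1, hlamt₀⟩
  have hper_le : ∀ y : ZMod n → F, orbitPeriod T y ≤ orbitPeriod T (eV F 0) := by
    intro y
    rw [orbitPeriod, hper_set]
    exact Nat.sInf_le ⟨hmem.1, fun j _ hlj => hmem.2 j hlj⟩
  have hsup_per : (Finset.univ.sup fun y : ZMod n → F => orbitPeriod T y)
      = orbitPeriod T (eV F 0) := by
    refine le_antisymm (Finset.sup_le fun y _ => hper_le y) (Finset.le_sup (Finset.mem_univ _))
  have hper_goal : orbitPeriod T f = Finset.univ.sup fun y : ZMod n → F => orbitPeriod T y := by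
    rw [hsup_per, hper_f_e0]
  rcases Nat.le_one_iff_eq_zero_or_eq_one.mp (hpre_le f) with h0 | h1
  · right
    exact ⟨hper_goal, by rw [h0, hsup_pre]⟩
  · left
    exact ⟨hper_goal, by rw [h1, hsup_pre]⟩

end Stmt10Key

section Stmt10Gauss

/-- Gauss sum nonvanishing for the multiplicative function. -/
lemma stmt10_gauss {n : ℕ} [Fact n.Prime] {F : Type} [Field F] {E : Type} [Field E] [Algebra F E]
    (ψ : AddChar (ZMod n) E) (hψ : ψ.IsPrimitive) (hnE : (n : E) ≠ 0)
    (f : ZMod n → F) (hf : IsMultFun f) (hnt : ∃ a : ZMod n, a ≠ 0 ∧ f a ≠ 1) :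
    ∀ j : ZMod n, j ≠ 0 → phiT ψ f j ≠ 0 := by
  have hn : n.Prime := Fact.out
  haveI : NeZero n := ⟨hn.ne_zero⟩
  obtain ⟨hf0, ⟨a₀, ha₀, hfa₀⟩, hmul⟩ := hf
  obtain ⟨b₀, hb₀, hfb₀⟩ := hnt
  have h1ne : f 1 ≠ 0 := by
    intro h
    apply hfa₀
    rw [← mul_one a₀, hmul a₀ 1 ha₀ one_ne_zero, h, mul_zero]
  have hf1 : f 1 = 1 := by
    have h := hmul 1 1 one_ne_zero one_ne_zero
    rw [one_mul] at h
    have h2 : f 1 * 1 = f 1 * f 1 := by rw [mul_one, ← h]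
    exact (mul_left_cancel₀ h1ne h2).symm
  let χ : MulChar (ZMod n) E :=
  { toFun := fun a => algebraMap F E (f a)
    map_one' := by
      show algebraMap F E (f 1) = 1
      rw [hf1, map_one]
    map_mul' := fun a b => by
      show algebraMap F E (f (a * b)) = algebraMap F E (f a) * algebraMap F E (f b)
      rcases eq_or_ne a 0 with rfl | ha
      · simp [hf0]
      rcases eq_or_ne b 0 with rfl | hb
      · simp [hf0]
      rw [hmul a b ha hb, map_mul]
    map_nonunit' := fun a ha => by
      show algebraMap F E (f a) = 0
      have h : a = 0 := by simpa [isUnit_iff_ne_zero] using ha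
      simp [h, hf0] }
  have hχapp : ∀ a : ZMod n, χ a = algebraMap F E (f a) := fun a => rfl
  have hχ1 : χ ≠ 1 := by
    intro h
    have hu : IsUnit b₀ := isUnit_iff_ne_zero.mpr hb₀
    have h2 : χ b₀ = 1 := by rw [h]; exact MulChar.one_apply hu
    rw [hχapp] at h2
    apply hfb₀
    apply (algebraMap F E).injective
    rw [h2, map_one]
  have hprim : ∀ j : ZMod n, j ≠ 0 → (ψ.mulShift j).IsPrimitive := by
    intro j hj a ha
    rw [AddChar.mulShift_mulShift]
    exact hψ (mul_ne_zero hj ha)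
  intro j hj
  have heq : phiT ψ f j = gaussSum χ (ψ.mulShift j) := by
    unfold phiT gaussSum
    refine Finset.sum_congr rfl fun a _ => ?_
    rw [AddChar.mulShift_apply, hχapp]
  rw [heq]
  refine gaussSum_ne_zero_of_nontrivial ?_ hχ1 (hprim j hj)
  rwa [ZMod.card]

end Stmt10Gauss

/-- Theorem 2: a nontrivial multiplicative function `f : ZMod n → F_q`
(`n` an odd prime, `n ≠ p = char F_q`) is a most complicated or almost most complicated
point for every operator of the form `A = B·Δ` with `B` translation-invariant. -/
theorem stmt10 (p d q n : ℕ) (hp : p.Prime) (hq : q = p ^ d)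
    [Fact n.Prime] (hodd : Odd n) (hnp : n ≠ p)
    (F : Type) [Field F] [Fintype F] [CharP F p] (hF : Fintype.card F = q)
    (f : ZMod n → F) (hf : IsMultFun f)
    (hnt : ∃ a : ZMod n, a ≠ 0 ∧ f a ≠ 1) :
    ∀ B : (ZMod n → F) →ₗ[F] (ZMod n → F),
      B ∘ₗ shiftOp F n = shiftOp F n ∘ₗ B →
      MostComplicated (fun y : ZMod n → F => (B ∘ₗ (shiftOp F n - LinearMap.id)) y) f ∨
      AlmostMostComplicated (fun y : ZMod n → F => (B ∘ₗ (shiftOp F n - LinearMap.id)) y) f := by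
  intro B hB
  have hn : n.Prime := Fact.out
  haveI : NeZero n := ⟨hn.ne_zero⟩
  have hpn : ¬ (p ∣ n) := by
    intro h
    exact hnp ((Nat.prime_dvd_prime_iff_eq hp hn).mp h).symm
  have hnF : ((n : ℕ) : F) ≠ 0 := by
    rw [Ne, CharP.cast_eq_zero_iff F p n]
    exact hpn
  haveI : NeZero ((n : ℕ) : F) := ⟨hnF⟩
  set np : ℕ+ := ⟨n, hn.pos⟩ with hnp'
  have hnc : ((np : ℕ) : F) ≠ 0 := hnF
  haveI : NeZero ((np : ℕ) : F) := ⟨hnc⟩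
  set E := CyclotomicField np F with hE
  haveI : CharP E p := charP_of_injective_algebraMap (algebraMap F E).injective p
  have hnE : ((n : ℕ) : E) ≠ 0 := by
    rw [Ne, CharP.cast_eq_zero_iff E p n]
    exact hpn
  have hζ : IsPrimitiveRoot (IsCyclotomicExtension.zeta np F E) n :=
    IsCyclotomicExtension.zeta_spec np F E
  set ψ : AddChar (ZMod n) E := AddChar.zmodChar n hζ.pow_eq_one with hψdef
  have hψ : ψ.IsPrimitive := by
    apply AddChar.zmod_char_primitive_of_eq_one_only_at_zero
    intro a ha
    rw [hψdef, AddChar.zmodChar_apply, ← pow_zero (IsCyclotomicExtension.zeta np F E)] at ha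
    exact (ZMod.val_eq_zero a).mp (hζ.pow_inj (ZMod.val_lt a) n.pos_of_neZero ha)
  exact stmt10_key ψ hψ hnE f (stmt10_gauss ψ hψ hnE f hf hnt) B hB
end
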